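/- arXiv:1708.07849 — 3 statements merged into one kernel-verified Lean document; each statement's English description precedes it below -/
import Mathlib

section
/- The map μ ↦ μ̃ maps the set of laminates with compact support in M^{2×2}_+ bijectively onto itself: if μ is a compactly supported Borel probability measure on M^{2×2}_+ satisfying f(μ̄) ≤ ∫ f dμ for every function f rank-one convex on M^{2×2}_+, then μ̃ satisfies the same Jensen inequality for every function rank-one convex on M^{2×2}_+, and the map is an involution on this set. -/
open MeasureTheory ENNReal

noncomputable section

instance matrixMeasurableSpace {m n : ℕ} : MeasurableSpace (Matrix (Fin m) (Fin n) ℝ) :=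
  show MeasurableSpace (Fin m → Fin n → ℝ) from inferInstance

/-- The Jacobian matrix of `φ : ℝⁿ → ℝᵐ` at `x`. -/
def jacobianM (m n : ℕ) (φ : (Fin n → ℝ) → (Fin m → ℝ)) (x : Fin n → ℝ) :
    Matrix (Fin m) (Fin n) ℝ :=
  Matrix.of fun i j => fderiv ℝ φ x (Pi.single j 1) i

/-- `f : ℝ^{m×n} → ℝ` is quasiconvex: `f` is Borel measurable, locally bounded, and for every
nonempty bounded open `Ω ⊆ ℝⁿ`, every `X₀` and every smooth `φ` compactly supported in `Ω`,
`f X₀ * |Ω| ≤ ∫_Ω f (X₀ + Dφ x) dx`. -/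
def IsQuasiconvex {m n : ℕ} (f : Matrix (Fin m) (Fin n) ℝ → ℝ) : Prop :=
  Measurable f ∧
  (∀ K : Set (Matrix (Fin m) (Fin n) ℝ), IsCompact K → ∃ C : ℝ, ∀ X ∈ K, |f X| ≤ C) ∧
  ∀ Ω : Set (Fin n → ℝ), IsOpen Ω → Ω.Nonempty → Bornology.IsBounded Ω →
    ∀ (X₀ : Matrix (Fin m) (Fin n) ℝ) (φ : (Fin n → ℝ) → (Fin m → ℝ)),
      ContDiff ℝ (⊤ : ℕ∞) φ → HasCompactSupport φ → tsupport φ ⊆ Ω →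
      f X₀ * (volume Ω).toReal ≤ ∫ x in Ω, f (X₀ + jacobianM m n φ x)

/-- `f : ℝ^{m×n} → ℝ` is rank-one convex. -/
def IsRankOneConvex {m n : ℕ} (f : Matrix (Fin m) (Fin n) ℝ → ℝ) : Prop :=
  ∀ X Y : Matrix (Fin m) (Fin n) ℝ, (X - Y).rank ≤ 1 →
    ∀ t : ℝ, t ∈ Set.Icc (0 : ℝ) 1 →
      f (t • X + (1 - t) • Y) ≤ t * f X + (1 - t) * f Y

/-- The barycentre `μ̄ = ∫ X dμ(X)`, computed entrywise. -/
def matBarycenter {m n : ℕ} (μ : Measure (Matrix (Fin m) (Fin n) ℝ)) :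
    Matrix (Fin m) (Fin n) ℝ :=
  Matrix.of fun i j => ∫ X, X i j ∂μ

/-- `M^{2×n}_tri`: second row is `(0, …, 0, a)`. -/
def Mtri (n : ℕ) : Set (Matrix (Fin 2) (Fin n) ℝ) :=
  {X | ∀ j : Fin n, (j : ℕ) + 1 < n → X 1 j = 0}

/-- `M^{2×n}_diag`: first row `(a₁, …, a_{n-1}, 0)`, second row `(0, …, 0, b)`. -/
def Mdiag (n : ℕ) : Set (Matrix (Fin 2) (Fin n) ℝ) :=
  {X | (∀ j : Fin n, (j : ℕ) + 1 < n → X 1 j = 0) ∧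
       (∀ j : Fin n, (j : ℕ) + 1 = n → X 0 j = 0)}

/-- The orthogonal projection of `ℝ^{2×n}` onto `M^{2×n}_diag`. -/
def Pdiag (n : ℕ) (X : Matrix (Fin 2) (Fin n) ℝ) : Matrix (Fin 2) (Fin n) ℝ :=
  Matrix.of fun i j =>
    if i = 0 then (if (j : ℕ) + 1 < n then X 0 j else 0)
    else (if (j : ℕ) + 1 = n then X 1 j else 0)

/-- A homogeneous gradient Young measure: a compactly supported Borel probability measure
satisfying Jensen's inequality for all quasiconvex functions. -/
def IsHomogeneousGradientYoungMeasure {m n : ℕ}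
    (μ : Measure (Matrix (Fin m) (Fin n) ℝ)) : Prop :=
  IsProbabilityMeasure μ ∧ (∃ K, IsCompact K ∧ μ Kᶜ = 0) ∧
  ∀ f : Matrix (Fin m) (Fin n) ℝ → ℝ, IsQuasiconvex f →
    f (matBarycenter μ) ≤ ∫ X, f X ∂μ

/-- A laminate: a compactly supported Borel probability measure
satisfying Jensen's inequality for all rank-one convex functions. -/
def IsLaminate {m n : ℕ} (μ : Measure (Matrix (Fin m) (Fin n) ℝ)) : Prop :=
  IsProbabilityMeasure μ ∧ (∃ K, IsCompact K ∧ μ Kᶜ = 0) ∧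
  ∀ f : Matrix (Fin m) (Fin n) ℝ → ℝ, IsRankOneConvex f →
    f (matBarycenter μ) ≤ ∫ X, f X ∂μ

/-- `M^{2×2}_+ = {X : X₁₂ > 0}`. -/
def Mplus : Set (Matrix (Fin 2) (Fin 2) ℝ) := {X | 0 < X 0 1}

/-- The partial Legendre transform `Ψ`. -/
def Psi (X : Matrix (Fin 2) (Fin 2) ℝ) : Matrix (Fin 2) (Fin 2) ℝ :=
  (X 0 1)⁻¹ • !![-(X 0 0), 1; -X.det, X 1 1]

/-- The dual function `h̃(X) = X₁₂ · h(Ψ(X))`. -/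
def dualFn (h : Matrix (Fin 2) (Fin 2) ℝ → ℝ) (X : Matrix (Fin 2) (Fin 2) ℝ) : ℝ :=
  X 0 1 * h (Psi X)

/-- The dual measure `μ̃`, characterised by
`∫ f dμ̃ = (1/μ̄₁₂) ∫ X₁₂ · f(Ψ(X)) dμ(X)` for all Borel `f : M → [0,∞]`. -/
def dualMeasure (μ : Measure (Matrix (Fin 2) (Fin 2) ℝ)) :
    Measure (Matrix (Fin 2) (Fin 2) ℝ) :=
  Measure.map Psi
    ((ENNReal.ofReal (matBarycenter μ 0 1))⁻¹ •
      μ.withDensity fun X => ENNReal.ofReal (X 0 1))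

/-- The (topological) support of a measure. -/
def mSupport {α : Type*} [TopologicalSpace α] [MeasurableSpace α] (μ : Measure α) : Set α :=
  {x | ∀ U : Set α, IsOpen U → x ∈ U → μ U ≠ 0}

/-- `f` is quasiconvex on the open set `U ⊆ ℝ^{2×2}`. -/
def IsQuasiconvexOn (U : Set (Matrix (Fin 2) (Fin 2) ℝ))
    (f : Matrix (Fin 2) (Fin 2) ℝ → ℝ) : Prop :=
  ∀ Ω : Set (Fin 2 → ℝ), IsOpen Ω → Ω.Nonempty → Bornology.IsBounded Ω →
    ∀ (A : Matrix (Fin 2) (Fin 2) ℝ) (φ : (Fin 2 → ℝ) → (Fin 2 → ℝ)),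
      ContDiff ℝ (⊤ : ℕ∞) φ → HasCompactSupport φ → tsupport φ ⊆ Ω →
      (∀ x, A + jacobianM 2 2 φ x ∈ U) →
      f A * (volume Ω).toReal ≤ ∫ x in Ω, f (A + jacobianM 2 2 φ x)

/-- `f` is rank-one convex on the open convex set `U ⊆ ℝ^{2×2}`. -/
def IsRankOneConvexOn (U : Set (Matrix (Fin 2) (Fin 2) ℝ))
    (f : Matrix (Fin 2) (Fin 2) ℝ → ℝ) : Prop :=
  ∀ X ∈ U, ∀ Y ∈ U, (X - Y).rank ≤ 1 →
    ∀ t : ℝ, t ∈ Set.Icc (0 : ℝ) 1 →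
      f (t • X + (1 - t) • Y) ≤ t * f X + (1 - t) * f Y

abbrev M2 := Matrix (Fin 2) (Fin 2) ℝ

lemma Psi_apply (X : M2) :
    Psi X = !![(X 0 1)⁻¹ * (-(X 0 0)), (X 0 1)⁻¹ * 1;
               (X 0 1)⁻¹ * (-X.det), (X 0 1)⁻¹ * X 1 1] := by
  unfold Psi
  ext i j
  fin_cases i <;> fin_cases j <;>
    simp [Matrix.smul_apply]

lemma rank_le_one_iff_det (A : M2) : A.rank ≤ 1 ↔ A.det = 0 := by
  have hdim : Module.finrank ℝ (Fin 2 → ℝ) = 2 := by simp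
  have hrn := LinearMap.finrank_range_add_finrank_ker A.mulVecLin
  rw [hdim] at hrn
  have hr : A.rank = Module.finrank ℝ (LinearMap.range A.mulVecLin) := rfl
  have hker : A.det = 0 ↔ 0 < Module.finrank ℝ (LinearMap.ker A.mulVecLin) := by
    rw [← Matrix.exists_mulVec_eq_zero_iff, Module.finrank_pos_iff,
      Submodule.nontrivial_iff_ne_bot, Submodule.ne_bot_iff]
    constructor
    · rintro ⟨v, hv, hv0⟩
      exact ⟨v, by simpa [Matrix.mulVecLin_apply] using hv0, hv⟩
    · rintro ⟨v, hv, hv0⟩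
      exact ⟨v, hv0, by simpa [Matrix.mulVecLin_apply] using hv⟩
  rw [hr, hker]
  omega

lemma Psi_01 (X : M2) : Psi X 0 1 = (X 0 1)⁻¹ := by
  rw [Psi_apply]
  simp

lemma psi_mem {X : M2} (hX : X ∈ Mplus) : Psi X ∈ Mplus := by
  have hx : (0:ℝ) < X 0 1 := hX
  show 0 < Psi X 0 1
  rw [Psi_01]
  exact inv_pos.2 hx

lemma psi_psi {X : M2} (hx' : X 0 1 ≠ 0) : Psi (Psi X) = X := by
  rw [Psi_apply X, Psi_apply]
  ext i j
  fin_cases i <;> fin_cases j <;>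
    · simp [Matrix.det_fin_two]
      try field_simp
      try ring

lemma det_affine {A B : M2} (h : (A - B).det = 0) (t : ℝ) :
    (t • A + (1-t) • B).det = t * A.det + (1-t) * B.det := by
  simp only [Matrix.det_fin_two, Matrix.add_apply, Matrix.smul_apply, Matrix.sub_apply,
    smul_eq_mul] at *
  linear_combination (-(t*(1-t))) * h

lemma det_psi_sub {A B : M2} (hA : A ∈ Mplus) (hB : B ∈ Mplus) (h : (A - B).det = 0) :
    (Psi A - Psi B).det = 0 := by
  have ha : A 0 1 ≠ 0 := ne_of_gt hA
  have hb : B 0 1 ≠ 0 := ne_of_gt hB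
  rw [Psi_apply A, Psi_apply B]
  simp only [Matrix.det_fin_two, Matrix.sub_apply, Matrix.cons_val', Matrix.cons_val_zero,
    Matrix.cons_val_one, Matrix.head_cons, Matrix.head_fin_const, Matrix.empty_val',
    Matrix.cons_val_fin_one, Matrix.of_apply] at *
  field_simp
  linear_combination (-(A 0 1 * B 0 1)) * h

lemma psi_combo {A B : M2} (hA : A ∈ Mplus) (hB : B ∈ Mplus) (h : (A - B).det = 0)
    {t : ℝ} (ht : t ∈ Set.Icc (0:ℝ) 1) :
    Psi (t • A + (1-t) • B) =
      (t * A 0 1 / (t * A 0 1 + (1-t) * B 0 1)) • Psi A +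
      ((1-t) * B 0 1 / (t * A 0 1 + (1-t) * B 0 1)) • Psi B := by
  have ha : (0:ℝ) < A 0 1 := hA
  have hb : (0:ℝ) < B 0 1 := hB
  have hz0 : 0 < t * A 0 1 + (1-t) * B 0 1 := by
    rcases eq_or_lt_of_le ht.1 with h0 | h0
    · rw [← h0]; simpa using hb
    · nlinarith [mul_nonneg (sub_nonneg.2 ht.2) hb.le]
  have hzne := ne_of_gt hz0
  have hane := ne_of_gt ha
  have hbne := ne_of_gt hb
  have hdet := det_affine h t
  have hz : (t • A + (1-t) • B) 0 1 = t * A 0 1 + (1-t) * B 0 1 := by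
    simp [Matrix.add_apply, Matrix.smul_apply]
  rw [Psi_apply, Psi_apply A, Psi_apply B, hdet, hz]
  ext i j
  fin_cases i <;> fin_cases j <;>
    · simp only [Matrix.add_apply, Matrix.smul_apply, smul_eq_mul, Matrix.cons_val',
        Matrix.cons_val_zero, Matrix.cons_val_one, Matrix.head_cons, Matrix.head_fin_const,
        Matrix.empty_val', Matrix.cons_val_fin_one, Matrix.of_apply, Fin.zero_eta, Fin.mk_one]
      field_simp
      all_goals ring

lemma dualFn_r1c {f : M2 → ℝ} (hf : IsRankOneConvexOn Mplus f) :
    IsRankOneConvexOn Mplus (dualFn f) := by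
  intro A hA B hB hrank t ht
  have h : (A - B).det = 0 := (rank_le_one_iff_det _).1 hrank
  have ha : (0:ℝ) < A 0 1 := hA
  have hb : (0:ℝ) < B 0 1 := hB
  set z : ℝ := t * A 0 1 + (1-t) * B 0 1 with hz_def
  have hz0 : 0 < z := by
    rcases eq_or_lt_of_le ht.1 with h0 | h0
    · rw [hz_def, ← h0]; simpa using hb
    · nlinarith [mul_nonneg (sub_nonneg.2 ht.2) hb.le]
  set s : ℝ := t * A 0 1 / z with hs_def
  have hs1 : 1 - s = (1-t) * B 0 1 / z := by
    field_simp [hs_def, hz_def]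
    rw [hs_def]; field_simp; ring
  have hs_mem : s ∈ Set.Icc (0:ℝ) 1 := by
    constructor
    · exact div_nonneg (mul_nonneg ht.1 ha.le) hz0.le
    · have : 0 ≤ 1 - s := by
        rw [hs1]
        exact div_nonneg (mul_nonneg (sub_nonneg.2 ht.2) hb.le) hz0.le
      linarith
  have key := psi_combo hA hB h ht
  rw [← hz_def, ← hs_def, ← hs1] at key
  have hz : (t • A + (1-t) • B) 0 1 = z := by
    simp [Matrix.add_apply, Matrix.smul_apply, hz_def]
  have main := hf (Psi A) (psi_mem hA) (Psi B) (psi_mem hB)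
    ((rank_le_one_iff_det _).2 (det_psi_sub hA hB h)) s hs_mem
  calc dualFn f (t • A + (1-t) • B) = z * f (Psi (t • A + (1-t) • B)) := by
        rw [dualFn, hz]
    _ = z * f (s • Psi A + (1-s) • Psi B) := by rw [key]
    _ ≤ z * (s * f (Psi A) + (1-s) * f (Psi B)) := by
        exact mul_le_mul_of_nonneg_left main hz0.le
    _ = t * dualFn f A + (1-t) * dualFn f B := by
        rw [dualFn, dualFn, hs1, hs_def]
        field_simp

lemma det_r1c : IsRankOneConvexOn Mplus (Matrix.det : M2 → ℝ) := by
  intro A _ B _ hrank t ht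
  rw [det_affine ((rank_le_one_iff_det _).1 hrank) t]

lemma neg_det_r1c : IsRankOneConvexOn Mplus (fun X : M2 => -X.det) := by
  intro A _ B _ hrank t ht
  simp only
  rw [det_affine ((rank_le_one_iff_det _).1 hrank) t]
  exact le_of_eq (by ring)

lemma measurable_entry (i j : Fin 2) : Measurable fun X : M2 => X i j :=
  (measurable_pi_apply j).comp (measurable_pi_apply i)

lemma measurable_det : Measurable (Matrix.det : M2 → ℝ) := by
  have hd : (Matrix.det : M2 → ℝ) = fun X => X 0 0 * X 1 1 - X 0 1 * X 1 0 :=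
    funext fun X => Matrix.det_fin_two X
  rw [hd]
  exact (((measurable_entry 0 0).mul (measurable_entry 1 1)).sub
    ((measurable_entry 0 1).mul (measurable_entry 1 0)))

lemma measurable_psi : Measurable Psi := by
  apply measurable_pi_lambda
  intro i
  apply measurable_pi_lambda
  intro j
  have : ∀ X : M2, Psi X i j = (X 0 1)⁻¹ * (!![-(X 0 0), 1; -X.det, X 1 1] i j) := by
    intro X; rfl
  simp only [this]
  apply Measurable.mul
  · exact (measurable_entry 0 1).inv
  · fin_cases i <;> fin_cases j <;>
      simp only [Matrix.cons_val', Matrix.cons_val_zero, Matrix.cons_val_one, Matrix.head_cons,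
        Matrix.head_fin_const, Matrix.empty_val', Matrix.cons_val_fin_one, Matrix.of_apply,
        Fin.mk_zero, Fin.mk_one]
    · exact (measurable_entry 0 0).neg
    · exact measurable_const
    · exact measurable_det.neg
    · exact measurable_entry 1 1

lemma continuous_entry (i j : Fin 2) : Continuous fun X : M2 => X i j :=
  (continuous_apply j).comp (continuous_apply i)

lemma continuousOn_psi : ContinuousOn Psi Mplus := by
  show ContinuousOn ((fun X : M2 => (X 0 1)⁻¹) • (fun X : M2 => !![-(X 0 0), 1; -X.det, X 1 1])) Mplus
  apply ContinuousOn.smul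
  · apply ContinuousOn.inv₀
    · exact (continuous_entry 0 1).continuousOn
    · intro X hX; exact ne_of_gt hX
  · apply Continuous.continuousOn
    apply continuous_matrix
    intro i j
    fin_cases i <;> fin_cases j <;>
      simp only [Matrix.cons_val', Matrix.cons_val_zero, Matrix.cons_val_one, Matrix.head_cons,
        Matrix.head_fin_const, Matrix.empty_val', Matrix.cons_val_fin_one, Matrix.of_apply,
        Fin.mk_zero, Fin.mk_one]
    · exact (continuous_entry 0 0).neg
    · exact continuous_const
    · exact (by simpa [Matrix.det_fin_two, Pi.mul_def, Pi.sub_def] using (((continuous_entry 0 0).mul (continuous_entry 1 1)).sub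
        ((continuous_entry 0 1).mul (continuous_entry 1 0))) : Continuous fun X : M2 => X.det).neg
    · exact continuous_entry 1 1

def Phi (X : M2) : M2 := if X 0 1 ≠ 0 then Psi X else X

lemma phi_psi {X : M2} (hX : X 0 1 ≠ 0) : Phi X = Psi X := if_pos hX

lemma involutive_phi : Function.Involutive Phi := by
  intro X
  by_cases h : X 0 1 ≠ 0
  · rw [phi_psi h, phi_psi (by rw [Psi_01]; exact inv_ne_zero h)]
    exact psi_psi h
  · simp only [Phi, if_neg h]

lemma measurable_phi : Measurable Phi := by
  apply Measurable.ite _ measurable_psi measurable_id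
  exact ((measurable_entry 0 1) (measurableSet_singleton 0)).compl

def PhiME : M2 ≃ᵐ M2 :=
  { toEquiv := involutive_phi.toPerm Phi
    measurable_toFun := measurable_phi
    measurable_invFun := measurable_phi }

lemma PhiEmb : MeasurableEmbedding Phi := PhiME.measurableEmbedding

instance matrixBorelSpace {m n : ℕ} : BorelSpace (Matrix (Fin m) (Fin n) ℝ) :=
  show BorelSpace (Fin m → Fin n → ℝ) from inferInstance

lemma bar01 (μ : Measure M2) : matBarycenter μ 0 1 = ∫ X, X 0 1 ∂μ := rfl

section Main

variable {μ : Measure M2} {K : Set M2}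

lemma haeK (hKc : μ Kᶜ = 0) : ∀ᵐ X ∂μ, X ∈ K := by
  rw [MeasureTheory.ae_iff]
  exact hKc

lemma integrable_of_cont (hK : IsCompact K) (hKc : μ Kᶜ = 0) [IsFiniteMeasure μ]
    {g : M2 → ℝ} (hg : Continuous g) : Integrable g μ := by
  obtain ⟨C, hC⟩ := (isBounded_iff_forall_norm_le.1 (hK.image hg).isBounded)
  refine Integrable.mono' (integrable_const C) hg.aestronglyMeasurable ?_
  exact (haeK hKc).mono fun X hX => hC _ (Set.mem_image_of_mem g hX)

lemma bar01_pos [IsProbabilityMeasure μ] (hK : IsCompact K) (hKM : K ⊆ Mplus)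
    (hKc : μ Kᶜ = 0) : 0 < matBarycenter μ 0 1 := by
  have hKne : K.Nonempty := by
    rcases Set.eq_empty_or_nonempty K with h | h
    · exfalso
      have : μ Set.univ = 0 := by
        rw [← Set.compl_empty, ← h]; exact hKc
      simp [measure_univ] at this
    · exact h
  obtain ⟨X₀, hX₀K, hmin⟩ := hK.exists_isMinOn hKne (continuous_entry 0 1).continuousOn
  have hε : (0:ℝ) < X₀ 0 1 := hKM hX₀K
  have hint : Integrable (fun X : M2 => X 0 1) μ :=
    integrable_of_cont hK hKc (continuous_entry 0 1)
  have hmono : ∫ X, X₀ 0 1 ∂μ ≤ ∫ X, X 0 1 ∂μ := by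
    refine integral_mono_ae (integrable_const _) hint ?_
    exact (haeK hKc).mono fun X hX => hmin hX
  rw [bar01]
  calc (0:ℝ) < X₀ 0 1 := hε
    _ = ∫ _, X₀ 0 1 ∂μ := by simp [measure_univ]
    _ ≤ _ := hmono

lemma integral_dual [IsProbabilityMeasure μ] (hK : IsCompact K) (hKM : K ⊆ Mplus)
    (hKc : μ Kᶜ = 0) (f : M2 → ℝ) :
    ∫ Y, f Y ∂(dualMeasure μ) = (matBarycenter μ 0 1)⁻¹ * ∫ X, dualFn f X ∂μ := by
  have hc : 0 < matBarycenter μ 0 1 := bar01_pos hK hKM hKc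
  set c := matBarycenter μ 0 1 with hc_def
  have haeM : ∀ᵐ X ∂μ, 0 < X 0 1 := (haeK hKc).mono fun X hX => hKM hX
  set ρ : M2 → ℝ≥0∞ := fun X => ENNReal.ofReal (X 0 1) with hρ_def
  have hρm : Measurable fun X : M2 => (X 0 1).toNNReal :=
    (measurable_entry 0 1).real_toNNReal
  set ν := (ENNReal.ofReal c)⁻¹ • μ.withDensity ρ with hν_def
  have hν_ac : ν ≪ μ := (withDensity_absolutelyContinuous μ ρ).smul_left _
  have haeM' : ∀ᵐ X ∂ν, 0 < X 0 1 := hν_ac.ae_le haeM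
  have hmap : dualMeasure μ = Measure.map Phi ν :=
    Measure.map_congr (haeM'.mono fun X hX => (phi_psi (ne_of_gt hX)).symm)
  rw [hmap, PhiEmb.integral_map, hν_def, integral_smul_measure]
  have hwd : μ.withDensity ρ = μ.withDensity fun X => ((X 0 1).toNNReal : ℝ≥0∞) := rfl
  rw [hwd, integral_withDensity_eq_integral_smul hρm]
  have h1 : ((ENNReal.ofReal c)⁻¹).toReal = c⁻¹ := by
    rw [ENNReal.toReal_inv, ENNReal.toReal_ofReal hc.le]
  have h2 : ∫ X, (X 0 1).toNNReal • f (Phi X) ∂μ = ∫ X, dualFn f X ∂μ := by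
    refine integral_congr_ae (haeM.mono fun X hX => ?_)
    simp only [phi_psi (ne_of_gt hX), dualFn, NNReal.smul_def,
      Real.coe_toNNReal _ hX.le, smul_eq_mul]
  rw [h1, h2, smul_eq_mul]


lemma Psi_00 (X : M2) : Psi X 0 0 = (X 0 1)⁻¹ * -(X 0 0) := by
  rw [Psi_apply]; simp

lemma Psi_10 (X : M2) : Psi X 1 0 = (X 0 1)⁻¹ * -X.det := by
  rw [Psi_apply]; simp

lemma Psi_11 (X : M2) : Psi X 1 1 = (X 0 1)⁻¹ * X 1 1 := by
  rw [Psi_apply]; simp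

lemma integral_det
    (hrc : ∀ f : M2 → ℝ, IsRankOneConvexOn Mplus f → f (matBarycenter μ) ≤ ∫ X, f X ∂μ) :
    ∫ X, X.det ∂μ = (matBarycenter μ).det := by
  have h1 := hrc _ det_r1c
  have h2 := hrc _ neg_det_r1c
  rw [integral_neg] at h2
  linarith

lemma bary_dual [IsProbabilityMeasure μ] (hK : IsCompact K) (hKM : K ⊆ Mplus)
    (hKc : μ Kᶜ = 0)
    (hdet : ∫ X, X.det ∂μ = (matBarycenter μ).det) :
    matBarycenter (dualMeasure μ) = Psi (matBarycenter μ) := by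
  have hc : 0 < matBarycenter μ 0 1 := bar01_pos hK hKM hKc
  have haeM : ∀ᵐ X ∂μ, 0 < X 0 1 := (haeK hKc).mono fun X hX => hKM hX
  ext i j
  have hentry : matBarycenter (dualMeasure μ) i j
      = (matBarycenter μ 0 1)⁻¹ * ∫ X, dualFn (fun Y => Y i j) X ∂μ :=
    integral_dual hK hKM hKc _
  rw [hentry]
  fin_cases i <;> fin_cases j
  · show (matBarycenter μ 0 1)⁻¹ * ∫ X, dualFn (fun Y => Y 0 0) X ∂μ
        = Psi (matBarycenter μ) 0 0
    have he : ∫ X, dualFn (fun Y : M2 => Y 0 0) X ∂μ = ∫ X, -(X 0 0) ∂μ := by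
      refine integral_congr_ae (haeM.mono fun X hX => ?_)
      rw [dualFn, Psi_00, ← mul_assoc, mul_inv_cancel₀ (ne_of_gt hX), one_mul]
    rw [he, integral_neg]
    show _ = Psi (matBarycenter μ) 0 0
    rw [Psi_00]
    rfl
  · show (matBarycenter μ 0 1)⁻¹ * ∫ X, dualFn (fun Y => Y 0 1) X ∂μ
        = Psi (matBarycenter μ) 0 1
    have he : ∫ X, dualFn (fun Y : M2 => Y 0 1) X ∂μ = ∫ _, (1:ℝ) ∂μ := by
      refine integral_congr_ae (haeM.mono fun X hX => ?_)
      rw [dualFn, Psi_01, mul_inv_cancel₀ (ne_of_gt hX)]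
    rw [he]
    simp only [integral_const, measure_univ, probReal_univ, ENNReal.toReal_one, smul_eq_mul, one_mul, mul_one]
    show _ = Psi (matBarycenter μ) 0 1
    rw [Psi_01]
  · show (matBarycenter μ 0 1)⁻¹ * ∫ X, dualFn (fun Y => Y 1 0) X ∂μ
        = Psi (matBarycenter μ) 1 0
    have he : ∫ X, dualFn (fun Y : M2 => Y 1 0) X ∂μ = ∫ X, -X.det ∂μ := by
      refine integral_congr_ae (haeM.mono fun X hX => ?_)
      rw [dualFn, Psi_10, ← mul_assoc, mul_inv_cancel₀ (ne_of_gt hX), one_mul]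
    rw [he, integral_neg, hdet]
    show _ = Psi (matBarycenter μ) 1 0
    rw [Psi_10]
  · show (matBarycenter μ 0 1)⁻¹ * ∫ X, dualFn (fun Y => Y 1 1) X ∂μ
        = Psi (matBarycenter μ) 1 1
    have he : ∫ X, dualFn (fun Y : M2 => Y 1 1) X ∂μ = ∫ X, X 1 1 ∂μ := by
      refine integral_congr_ae (haeM.mono fun X hX => ?_)
      rw [dualFn, Psi_11, ← mul_assoc, mul_inv_cancel₀ (ne_of_gt hX), one_mul]
    rw [he]
    show _ = Psi (matBarycenter μ) 1 1
    rw [Psi_11]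
    rfl

lemma dual_prob [IsProbabilityMeasure μ] (hK : IsCompact K) (hKM : K ⊆ Mplus)
    (hKc : μ Kᶜ = 0) : IsProbabilityMeasure (dualMeasure μ) := by
  have hc : 0 < matBarycenter μ 0 1 := bar01_pos hK hKM hKc
  constructor
  rw [dualMeasure, Measure.map_apply measurable_psi MeasurableSet.univ, Set.preimage_univ,
    Measure.smul_apply, withDensity_apply _ MeasurableSet.univ, Measure.restrict_univ]
  have hint : Integrable (fun X : M2 => X 0 1) μ :=
    integrable_of_cont hK hKc (continuous_entry 0 1)
  have hl : ∫⁻ X, ENNReal.ofReal (X 0 1) ∂μ = ENNReal.ofReal (∫ X, X 0 1 ∂μ) :=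
    (ofReal_integral_eq_lintegral_ofReal hint
      ((haeK hKc).mono fun X hX => le_of_lt (hKM hX))).symm
  rw [hl, ← bar01, smul_eq_mul]
  exact ENNReal.inv_mul_cancel (by simp [ENNReal.ofReal_pos, hc]) ENNReal.ofReal_ne_top

lemma dual_supp_null [IsProbabilityMeasure μ] (hK : IsCompact K) (hKM : K ⊆ Mplus)
    (hKc : μ Kᶜ = 0) : (dualMeasure μ) (Psi '' K)ᶜ = 0 := by
  have hcomp : IsCompact (Psi '' K) := hK.image_of_continuousOn (continuousOn_psi.mono hKM)
  have hν_ac : ((ENNReal.ofReal (matBarycenter μ 0 1))⁻¹ •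
      μ.withDensity fun X => ENNReal.ofReal (X 0 1)) ≪ μ :=
    (withDensity_absolutelyContinuous μ _).smul_left _
  rw [dualMeasure, Measure.map_apply measurable_psi hcomp.isClosed.measurableSet.compl]
  refine le_antisymm (le_trans (measure_mono ?_) (le_of_eq (hν_ac hKc))) (zero_le)
  intro X hX
  simp only [Set.mem_preimage, Set.mem_compl_iff] at hX ⊢
  exact fun hXK => hX (Set.mem_image_of_mem Psi hXK)

lemma dual_jensen [IsProbabilityMeasure μ] (hK : IsCompact K) (hKM : K ⊆ Mplus)
    (hKc : μ Kᶜ = 0)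
    (hrc : ∀ f : M2 → ℝ, IsRankOneConvexOn Mplus f → f (matBarycenter μ) ≤ ∫ X, f X ∂μ)
    (f : M2 → ℝ) (hf : IsRankOneConvexOn Mplus f) :
    f (matBarycenter (dualMeasure μ)) ≤ ∫ Y, f Y ∂(dualMeasure μ) := by
  have hc : 0 < matBarycenter μ 0 1 := bar01_pos hK hKM hKc
  rw [bary_dual hK hKM hKc (integral_det hrc), integral_dual hK hKM hKc]
  have h := hrc _ (dualFn_r1c hf)
  have hfb : f (Psi (matBarycenter μ))
      = (matBarycenter μ 0 1)⁻¹ * dualFn f (matBarycenter μ) := by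
    rw [dualFn, ← mul_assoc, inv_mul_cancel₀ (ne_of_gt hc), one_mul]
  rw [hfb]
  exact mul_le_mul_of_nonneg_left h (inv_nonneg.2 hc.le)

lemma dual_dual [IsProbabilityMeasure μ] (hK : IsCompact K) (hKM : K ⊆ Mplus)
    (hKc : μ Kᶜ = 0)
    (hdet : ∫ X, X.det ∂μ = (matBarycenter μ).det) :
    dualMeasure (dualMeasure μ) = μ := by
  have hc : 0 < matBarycenter μ 0 1 := bar01_pos hK hKM hKc
  set c := matBarycenter μ 0 1 with hc_def
  have haeM : ∀ᵐ X ∂μ, 0 < X 0 1 := (haeK hKc).mono fun X hX => hKM hX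
  set ρ : M2 → ℝ≥0∞ := fun X => ENNReal.ofReal (X 0 1) with hρ_def
  have hρm : Measurable ρ := ENNReal.measurable_ofReal.comp (measurable_entry 0 1)
  set ν := (ENNReal.ofReal c)⁻¹ • μ.withDensity ρ with hν_def
  have hν_ac : ν ≪ μ := (withDensity_absolutelyContinuous μ ρ).smul_left _
  have haeM' : ∀ᵐ X ∂ν, 0 < X 0 1 := hν_ac.ae_le haeM
  have hmap : dualMeasure μ = Measure.map Phi ν :=
    Measure.map_congr (haeM'.mono fun X hX => (phi_psi (ne_of_gt hX)).symm)
  have hbar : matBarycenter (dualMeasure μ) 0 1 = c⁻¹ := by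
    rw [bary_dual hK hKM hKc hdet, Psi_01]
  -- the dual measure is a.e. supported in Mplus
  have hsupp2 : (dualMeasure μ) (Psi '' K)ᶜ = 0 := dual_supp_null hK hKM hKc
  have haeM2 : ∀ᵐ Y ∂(dualMeasure μ), 0 < Y 0 1 :=
    (haeK hsupp2).mono fun Y hY => by
      obtain ⟨X, hXK, rfl⟩ := hY
      exact psi_mem (hKM hXK)
  set ν₂ := (ENNReal.ofReal c⁻¹)⁻¹ • (dualMeasure μ).withDensity ρ with hν₂_def
  have hν₂_ac : ν₂ ≪ dualMeasure μ :=
    (withDensity_absolutelyContinuous (dualMeasure μ) ρ).smul_left _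
  have haeM₂' : ∀ᵐ Y ∂ν₂, 0 < Y 0 1 := hν₂_ac.ae_le haeM2
  have hmap2 : dualMeasure (dualMeasure μ) = Measure.map Phi ν₂ := by
    rw [dualMeasure, hbar]
    exact Measure.map_congr (haeM₂'.mono fun Y hY => (phi_psi (ne_of_gt hY)).symm)
  -- withDensity of a mapped measure
  have hwd_map : (dualMeasure μ).withDensity ρ
      = Measure.map Phi (ν.withDensity (ρ ∘ Phi)) := by
    refine Measure.ext fun s hs => ?_
    rw [withDensity_apply _ hs, hmap, setLIntegral_map hs hρm measurable_phi,
      Measure.map_apply measurable_phi hs, withDensity_apply _ (measurable_phi hs)]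
    rfl
  have hwd2 : ν.withDensity (ρ ∘ Phi) = (ENNReal.ofReal c)⁻¹ • μ.withDensity (ρ * (ρ ∘ Phi)) := by
    rw [hν_def, withDensity_smul_measure, ← withDensity_mul μ hρm (hρm.comp measurable_phi)]
  have hwd3 : μ.withDensity (ρ * (ρ ∘ Phi)) = μ := by
    have h1 : (ρ * (ρ ∘ Phi)) =ᵐ[μ] 1 := by
      refine haeM.mono fun X hX => ?_
      have hne := ne_of_gt hX
      simp only [Pi.mul_apply, Function.comp_apply, Pi.one_apply, hρ_def,
        phi_psi hne, Psi_01, ← ENNReal.ofReal_mul hX.le, mul_inv_cancel₀ hne,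
        ENNReal.ofReal_one]
    rw [withDensity_congr_ae h1, withDensity_one]
  have hcoef : (ENNReal.ofReal c⁻¹)⁻¹ * (ENNReal.ofReal c)⁻¹ = 1 := by
    rw [ENNReal.ofReal_inv_of_pos hc, inv_inv]
    exact ENNReal.mul_inv_cancel (by simp [ENNReal.ofReal_pos, hc]) ENNReal.ofReal_ne_top
  rw [hmap2, hν₂_def, hwd_map, hwd2, hwd3, Measure.map_smul,
    Measure.map_map measurable_phi measurable_phi, involutive_phi.comp_self, Measure.map_id,
    smul_smul, hcoef, one_smul]

end Main


/-- The map `μ ↦ μ̃` maps the laminates with compact support in `M^{2×2}_+` bijectively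
onto themselves, and is an involution on this set. -/
theorem dualMeasure_laminate
    (μ : Measure (Matrix (Fin 2) (Fin 2) ℝ))
    (hprob : IsProbabilityMeasure μ)
    (hsupp : ∃ K : Set (Matrix (Fin 2) (Fin 2) ℝ), IsCompact K ∧ K ⊆ Mplus ∧ μ Kᶜ = 0)
    (hrc : ∀ f : Matrix (Fin 2) (Fin 2) ℝ → ℝ, IsRankOneConvexOn Mplus f →
      f (matBarycenter μ) ≤ ∫ X, f X ∂μ) :
    IsProbabilityMeasure (dualMeasure μ) ∧
    (∃ K : Set (Matrix (Fin 2) (Fin 2) ℝ), IsCompact K ∧ K ⊆ Mplus ∧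
      (dualMeasure μ) Kᶜ = 0) ∧
    (∀ f : Matrix (Fin 2) (Fin 2) ℝ → ℝ, IsRankOneConvexOn Mplus f →
      f (matBarycenter (dualMeasure μ)) ≤ ∫ X, f X ∂(dualMeasure μ)) ∧
    dualMeasure (dualMeasure μ) = μ := by
  obtain ⟨K, hK, hKM, hKc⟩ := hsupp
  haveI := hprob
  exact ⟨dual_prob hK hKM hKc,
    ⟨Psi '' K, hK.image_of_continuousOn (continuousOn_psi.mono hKM),
      fun Y hY => by obtain ⟨X, hX, rfl⟩ := hY; exact psi_mem (hKM hX),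
      dual_supp_null hK hKM hKc⟩,
    fun f hf => dual_jensen hK hKM hKc hrc f hf,
    dual_dual hK hKM hKc (integral_det hrc)⟩

end
end

section
/- Let f : ℝ^{2×n} → ℝ be rank-one convex with f(0) = 0. Suppose u₁, …, u_{n−1} : ℝⁿ → ℝ are finite linear combinations u_i = Σ_{ε : ε_n = 0} Σ_{j=J}^{K} Σ_{k ∈ ℤⁿ} a^{(ε)}_{j,k,i} h^{(ε)}_{j,k} of Haar functions with ε_n = 0, and v_n : ℝⁿ → ℝ is a finite linear combination v_n = Σ_{j=J}^{K} Σ_{k ∈ ℤⁿ} b_{j,k} h^{(e_n)}_{j,k} of Haar functions with ε = e_n, where the coefficients a^{(ε)}_{j,k,i} and b_{j,k} vanish whenever |k| is sufficiently large (so only finitely many are nonzero). Then ∫_{ℝⁿ} f(M(x)) dx ≥ 0, where M(x) is the 2×n matrix with first row (u₁(x), …, u_{n−1}(x), 0) and second row (0, …, 0, v_n(x)). -/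
open MeasureTheory

noncomputable section

/-- The mother Haar function `h_{[0,1)} = χ_{[0,1/2)} − χ_{[1/2,1)}`. -/
def haarMother (x : ℝ) : ℝ :=
  if 0 ≤ x ∧ x < 1 / 2 then 1 else if 1 / 2 ≤ x ∧ x < 1 then -1 else 0

/-- `h_I` for the dyadic interval `I = [k·2^{-j}, (k+1)·2^{-j})`:
`h_I(x) = h_{[0,1)}((x−a)/(b−a))`. -/
def haar1d (j k : ℤ) (x : ℝ) : ℝ := haarMother (2 ^ j * x - k)

/-- The indicator `χ_I` of the dyadic interval `I = [k·2^{-j}, (k+1)·2^{-j})`. -/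
def dyadicIndicator (j k : ℤ) (x : ℝ) : ℝ :=
  if 0 ≤ 2 ^ j * x - (k : ℝ) ∧ 2 ^ j * x - (k : ℝ) < 1 then 1 else 0

/-- The Haar function `h^{(ε)}_{j,k}(x) = Π_l h_{I_l}^{ε_l}(x_l)` on `ℝⁿ`, where the factor
is `h_{I_l}` if `ε_l = 1` and `χ_{I_l}` if `ε_l = 0`. -/
def haarND (n : ℕ) (ε : Fin n → Bool) (j : ℤ) (k : Fin n → ℤ) (x : Fin n → ℝ) : ℝ :=
  ∏ l : Fin n, if ε l then haar1d j (k l) (x l) else dyadicIndicator j (k l) (x l)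

namespace JHaux

lemma two_pow_pos' (d : ℕ) : (0:ℤ) < 2 ^ d := pow_pos two_pos d

lemma ediv_add (t : ℤ) (d : ℕ) : (t + 2 ^ d) / 2 ^ d = t / 2 ^ d + 1 := by
  have := Int.add_mul_ediv_right t 1 (ne_of_gt (two_pow_pos' d)); simpa using this

lemma ediv_sub (t : ℤ) (d : ℕ) : (t - 2 ^ d) / 2 ^ d = t / 2 ^ d - 1 := by
  have := Int.add_mul_ediv_right t (-1) (ne_of_gt (two_pow_pos' d))
  simpa [sub_eq_add_neg] using this

lemma ediv_ediv' (a p q : ℤ) (hp : 0 < p) (hq : 0 < q) : a / p / q = a / (p * q) := by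
  have hpq : 0 < p * q := mul_pos hp hq
  have h1 : p * (a / p) + a % p = a := Int.mul_ediv_add_emod a p
  have h2 : q * (a / p / q) + (a / p) % q = a / p := Int.mul_ediv_add_emod (a / p) q
  have hr1 : 0 ≤ a % p := Int.emod_nonneg a (ne_of_gt hp)
  have hr1' : a % p < p := Int.emod_lt_of_pos a hp
  have hr2 : 0 ≤ (a / p) % q := Int.emod_nonneg _ (ne_of_gt hq)
  have hr2' : (a / p) % q < q := Int.emod_lt_of_pos _ hq
  have key : (p * ((a / p) % q) + a % p) + (p * q) * (a / p / q) = a ∧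
      0 ≤ p * ((a / p) % q) + a % p ∧ p * ((a / p) % q) + a % p < p * q := by
    refine ⟨by nlinarith, by positivity, by nlinarith⟩
  exact ((Int.ediv_emod_unique hpq).2 key).1.symm

def dmo (s : ℤ) : ℝ := if s = 0 then 1 else if s = 1 then -1 else 0
def dh (e : ℕ) (k t : ℤ) : ℝ := dmo (t / 2 ^ e - 2 * k)
def dchi (e : ℕ) (k t : ℤ) : ℝ := if t / 2 ^ (e + 1) = k then 1 else 0
def flipc (d : ℕ) (t : ℤ) : ℤ := if (t / 2 ^ d) % 2 = 0 then t + 2 ^ d else t - 2 ^ d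

lemma flipc_ediv (d : ℕ) (t : ℤ) :
    flipc d t / 2 ^ d = if (t / 2 ^ d) % 2 = 0 then t / 2 ^ d + 1 else t / 2 ^ d - 1 := by
  unfold flipc; split_ifs with h
  · exact ediv_add t d
  · exact ediv_sub t d

lemma flipc_invol (d : ℕ) : Function.Involutive (flipc d) := by
  intro t
  by_cases h : (t / 2 ^ d) % 2 = 0
  · have h1 : flipc d t = t + 2 ^ d := by unfold flipc; rw [if_pos h]
    have h2 : flipc d t / 2 ^ d = t / 2 ^ d + 1 := by rw [h1]; exact ediv_add t d
    conv_lhs => rw [flipc]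
    rw [h2, if_neg (by omega), h1]; ring
  · have h1 : flipc d t = t - 2 ^ d := by unfold flipc; rw [if_neg h]
    have h2 : flipc d t / 2 ^ d = t / 2 ^ d - 1 := by rw [h1]; exact ediv_sub t d
    conv_lhs => rw [flipc]
    rw [h2, if_pos (by omega), h1]; ring

lemma flipc_ediv_succ (d : ℕ) (t : ℤ) : flipc d t / 2 ^ (d + 1) = t / 2 ^ (d + 1) := by
  have key : ∀ s : ℤ, s / 2 ^ (d + 1) = s / 2 ^ d / 2 := by
    intro s
    rw [ediv_ediv' s (2 ^ d) 2 (two_pow_pos' d) two_pos, pow_succ]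
  rw [key, key, flipc_ediv]
  split_ifs with h <;> omega

lemma flipc_ediv_ge (d e : ℕ) (he : d < e) (t : ℤ) : flipc d t / 2 ^ e = t / 2 ^ e := by
  obtain ⟨c, rfl⟩ : ∃ c, e = (d + 1) + c := ⟨e - (d + 1), by omega⟩
  have key : ∀ s : ℤ, s / 2 ^ (d + 1 + c) = s / 2 ^ (d + 1) / 2 ^ c := by
    intro s
    rw [ediv_ediv' s (2 ^ (d+1)) (2 ^ c) (two_pow_pos' _) (two_pow_pos' _), pow_add]
  rw [key, key, flipc_ediv_succ]

lemma dh_flip_self (d : ℕ) (k t : ℤ) : dh d k (flipc d t) = -dh d k t := by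
  unfold dh dmo
  rw [flipc_ediv]
  generalize t / 2 ^ d = q
  split_ifs <;> first | (exfalso; omega) | norm_num

lemma dh_flip_ne (d e : ℕ) (he : d < e) (k t : ℤ) : dh e k (flipc d t) = dh e k t := by
  unfold dh; rw [flipc_ediv_ge d e he]

lemma dchi_flip (d e : ℕ) (he : d ≤ e) (k t : ℤ) : dchi e k (flipc d t) = dchi e k t := by
  unfold dchi; rw [flipc_ediv_ge d (e + 1) (by omega)]

lemma abs_lt_of_ediv (t : ℤ) (e : ℕ) (C : ℤ) (h : |t / 2 ^ e| ≤ C) : |t| < (C + 1) * 2 ^ e := by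
  have h1 : 2 ^ e * (t / 2 ^ e) + t % 2 ^ e = t := Int.mul_ediv_add_emod _ _
  have hr : 0 ≤ t % 2 ^ e := Int.emod_nonneg _ (ne_of_gt (two_pow_pos' e))
  have hr' : t % 2 ^ e < 2 ^ e := Int.emod_lt_of_pos _ (two_pow_pos' e)
  have hp := two_pow_pos' e
  rw [abs_le] at h
  rw [abs_lt]
  constructor <;> nlinarith

lemma floor_div_pow (y : ℝ) (d : ℕ) : ⌊y / (2:ℝ) ^ d⌋ = ⌊y⌋ / 2 ^ d := by
  have hd : (0:ℝ) < (2:ℝ) ^ d := by positivity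
  have h2 : (0:ℤ) < 2 ^ d := two_pow_pos' d
  rw [Int.floor_eq_iff]
  have h1 : 2 ^ d * (⌊y⌋ / 2 ^ d) + ⌊y⌋ % 2 ^ d = ⌊y⌋ := Int.mul_ediv_add_emod _ _
  have hr : 0 ≤ ⌊y⌋ % 2 ^ d := Int.emod_nonneg _ (ne_of_gt h2)
  have hr' : ⌊y⌋ % 2 ^ d < 2 ^ d := Int.emod_lt_of_pos _ h2
  have hy1 : (⌊y⌋ : ℝ) ≤ y := Int.floor_le y
  have hy2 : y < ⌊y⌋ + 1 := Int.lt_floor_add_one y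
  constructor
  · rw [le_div_iff₀ hd]
    have h3 : ((2:ℤ) ^ d * (⌊y⌋ / 2 ^ d) : ℤ) ≤ ⌊y⌋ := by omega
    have h4 : (((2:ℤ) ^ d * (⌊y⌋ / 2 ^ d) : ℤ) : ℝ) ≤ (⌊y⌋ : ℝ) := Int.cast_le.2 h3
    push_cast at h4 ⊢
    nlinarith
  · rw [div_lt_iff₀ hd]
    have h3 : (⌊y⌋ : ℤ) + 1 ≤ 2 ^ d * (⌊y⌋ / 2 ^ d + 1) := by nlinarith
    have h4 : ((⌊y⌋ : ℤ) + 1 : ℝ) ≤ (((2:ℤ) ^ d * (⌊y⌋ / 2 ^ d + 1) : ℤ) : ℝ) := by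
      exact_mod_cast Int.cast_le.2 h3
    push_cast at h4 ⊢
    nlinarith

lemma haarMother_eq (y : ℝ) : haarMother y = dmo ⌊2 * y⌋ := by
  have h0 : ⌊2 * y⌋ = 0 ↔ 0 ≤ y ∧ y < 1 / 2 := by
    rw [Int.floor_eq_iff]
    push_cast
    constructor <;> rintro ⟨h1, h2⟩ <;> exact ⟨by linarith, by linarith⟩
  have h1 : ⌊2 * y⌋ = 1 ↔ 1 / 2 ≤ y ∧ y < 1 := by
    rw [Int.floor_eq_iff]
    push_cast
    constructor <;> rintro ⟨h1, h2⟩ <;> exact ⟨by linarith, by linarith⟩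
  unfold haarMother
  split_ifs with hc1 hc2
  · have h := h0.2 hc1; simp [dmo, h]
  · have h := h1.2 hc2; simp [dmo, h]
  · have e0 : ⌊2 * y⌋ ≠ 0 := fun h => hc1 (h0.1 h)
    have e1 : ⌊2 * y⌋ ≠ 1 := fun h => hc2 (h1.1 h)
    simp [dmo, e0, e1]

lemma zpow_split (K j : ℤ) (hj : j ≤ K) :
    (2:ℝ) ^ (K + 1) = (2:ℝ) ^ (j + 1) * (2:ℝ) ^ ((K - j).toNat : ℕ) := by
  rw [← zpow_natCast (2:ℝ) (K - j).toNat, ← zpow_add₀ (two_ne_zero)]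
  congr 1
  omega

lemma haar1d_eq (K j k : ℤ) (hj : j ≤ K) (x : ℝ) :
    haar1d j k x = dh (K - j).toNat k ⌊(2:ℝ) ^ (K + 1) * x⌋ := by
  unfold haar1d dh
  rw [haarMother_eq]
  have h2 : 2 * ((2:ℝ) ^ j * x - k) = (2:ℝ) ^ (j + 1) * x - ((2 * k : ℤ) : ℝ) := by
    rw [zpow_add₀ (two_ne_zero) j 1]
    push_cast
    ring
  rw [h2]
  have h3 : (2:ℝ) ^ (j + 1) * x = (2:ℝ) ^ (K + 1) * x / (2:ℝ) ^ ((K - j).toNat : ℕ) := by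
    rw [zpow_split K j hj]
    have : ((2:ℝ) ^ ((K - j).toNat : ℕ)) ≠ 0 := by positivity
    field_simp
  rw [h3, Int.floor_sub_intCast, floor_div_pow]

lemma dyadicIndicator_eq (K j k : ℤ) (hj : j ≤ K) (x : ℝ) :
    dyadicIndicator j k x = dchi (K - j).toNat k ⌊(2:ℝ) ^ (K + 1) * x⌋ := by
  unfold dyadicIndicator dchi
  have h3 : (2:ℝ) ^ j * x = (2:ℝ) ^ (K + 1) * x / (2:ℝ) ^ (((K - j).toNat : ℕ) + 1) := by
    have hsplit : (2:ℝ) ^ (K + 1) = (2:ℝ) ^ j * (2:ℝ) ^ ((((K - j).toNat : ℕ) + 1 : ℕ)) := by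
      rw [← zpow_natCast (2:ℝ) ((K - j).toNat + 1), ← zpow_add₀ (two_ne_zero)]
      congr 1
      omega
    rw [hsplit]
    have : ((2:ℝ) ^ (((K - j).toNat : ℕ) + 1)) ≠ 0 := by positivity
    field_simp
  have key : (0 ≤ (2:ℝ) ^ j * x - (k : ℝ) ∧ (2:ℝ) ^ j * x - (k : ℝ) < 1) ↔
      (⌊(2:ℝ) ^ (K + 1) * x⌋ / 2 ^ ((K - j).toNat + 1) = k) := by
    rw [← floor_div_pow, ← h3, Int.floor_eq_iff]
    constructor <;> rintro ⟨h1, h2⟩ <;> exact ⟨by linarith, by linarith⟩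
  rw [if_congr key rfl rfl]

def dHaar (n : ℕ) (ε : Fin n → Bool) (e : ℕ) (k m : Fin n → ℤ) : ℝ :=
  ∏ l : Fin n, if ε l then dh e (k l) (m l) else dchi e (k l) (m l)

lemma haarND_eq (n : ℕ) (ε : Fin n → Bool) (K j : ℤ) (hj : j ≤ K) (k : Fin n → ℤ)
    (x : Fin n → ℝ) :
    haarND n ε j k x = dHaar n ε (K - j).toNat k (fun l => ⌊(2:ℝ) ^ (K + 1) * x l⌋) := by
  unfold haarND dHaar
  refine Finset.prod_congr rfl fun l _ => ?_
  by_cases h : ε l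
  · rw [if_pos h, if_pos h, haar1d_eq K j _ hj]
  · rw [if_neg h, if_neg h, dyadicIndicator_eq K j _ hj]

end JHaux
namespace JHaux

def Flip (n : ℕ) (L : Fin n) (d : ℕ) (m : Fin n → ℤ) : Fin n → ℤ :=
  Function.update m L (flipc d (m L))

lemma Flip_invol (n : ℕ) (L : Fin n) (d : ℕ) : Function.Involutive (Flip n L d) := by
  intro m
  unfold Flip
  rw [Function.update_self, Function.update_idem, flipc_invol d, Function.update_eq_self]

lemma dHaar_flip_inv (n : ℕ) (ε : Fin n → Bool) (e : ℕ) (L : Fin n) (d : ℕ)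
    (k m : Fin n → ℤ) (hde : d ≤ e) (hεL : ε L = true → d < e) :
    dHaar n ε e k (Flip n L d m) = dHaar n ε e k m := by
  unfold dHaar Flip
  refine Finset.prod_congr rfl fun l _ => ?_
  by_cases hl : l = L
  · subst hl
    rw [Function.update_self]
    by_cases h : ε l
    · rw [if_pos h, if_pos h, dh_flip_ne d e (hεL h)]
    · rw [if_neg h, if_neg h, dchi_flip d e hde]
  · rw [Function.update_of_ne hl]

lemma dHaar_flip_anti (n : ℕ) (ε : Fin n → Bool) (L : Fin n) (d : ℕ)
    (k m : Fin n → ℤ) (hεL : ε L = true) :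
    dHaar n ε d k (Flip n L d m) = -dHaar n ε d k m := by
  unfold dHaar Flip
  rw [← Finset.mul_prod_erase Finset.univ
      (fun l => if ε l then dh d (k l) (Function.update m L (flipc d (m L)) l)
        else dchi d (k l) (Function.update m L (flipc d (m L)) l)) (Finset.mem_univ L),
    ← Finset.mul_prod_erase Finset.univ
      (fun l => if ε l then dh d (k l) (m l) else dchi d (k l) (m l)) (Finset.mem_univ L)]
  have hrest : ∏ l ∈ Finset.univ.erase L,
      (if ε l then dh d (k l) (Function.update m L (flipc d (m L)) l)
        else dchi d (k l) (Function.update m L (flipc d (m L)) l)) =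
      ∏ l ∈ Finset.univ.erase L, (if ε l then dh d (k l) (m l) else dchi d (k l) (m l)) :=
    Finset.prod_congr rfl fun l hl => by
      rw [Function.update_of_ne (Finset.ne_of_mem_erase hl)]
  rw [hrest, Function.update_self, if_pos hεL, if_pos hεL, dh_flip_self]
  ring

abbrev incl (n : ℕ) (ε : Fin n → Bool) (j' j : ℤ) (l : ℕ) : Prop :=
  j' < j ∨ (j' = j ∧ ∀ d : Fin n, ε d = true → (d : ℕ) < l)

def gensum (n : ℕ) (J K : ℤ) (ε : Fin n → Bool) (coef : ℤ → (Fin n → ℤ) → ℝ)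
    (j : ℤ) (l : ℕ) (m : Fin n → ℤ) : ℝ :=
  ∑ j' ∈ Finset.Icc J K,
    if incl n ε j' j l then ∑ᶠ k : Fin n → ℤ, coef j' k * dHaar n ε (K - j').toNat k m else 0

lemma gensum_flip_inv (n : ℕ) (J K : ℤ) (ε : Fin n → Bool) (coef : ℤ → (Fin n → ℤ) → ℝ)
    (j : ℤ) (hj : j ≤ K) (L : Fin n) (hεL : ε L = false) (l' : ℕ) (m : Fin n → ℤ) :
    gensum n J K ε coef j l' (Flip n L ((K - j).toNat) m) = gensum n J K ε coef j l' m := by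
  unfold gensum
  refine Finset.sum_congr rfl fun j' hj' => ?_
  rw [Finset.mem_Icc] at hj'
  by_cases h : incl n ε j' j l'
  · rw [if_pos h, if_pos h]
    refine finsum_congr fun k => ?_
    have hle : j' ≤ j := by rcases h with h | ⟨rfl, _⟩ <;> omega
    rw [dHaar_flip_inv n ε _ L _ k m (by omega) (fun ht => by rw [hεL] at ht; cases ht)]
  · rw [if_neg h, if_neg h]

lemma gensum_succ_flip (n : ℕ) (J K : ℤ) (ε : Fin n → Bool) (coef : ℤ → (Fin n → ℤ) → ℝ)
    (j : ℤ) (hj : j ≤ K) (L : Fin n) (m : Fin n → ℤ) :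
    gensum n J K ε coef j ((L : ℕ) + 1) (Flip n L ((K - j).toNat) m)
      + gensum n J K ε coef j ((L : ℕ) + 1) m
      = 2 * gensum n J K ε coef j (L : ℕ) m := by
  unfold gensum
  rw [← Finset.sum_add_distrib, Finset.mul_sum]
  refine Finset.sum_congr rfl fun j' hj' => ?_
  rw [Finset.mem_Icc] at hj'
  by_cases h2 : incl n ε j' j (L : ℕ)
  · have h1 : incl n ε j' j ((L : ℕ) + 1) := by
      rcases h2 with h | ⟨rfl, hall⟩
      · exact Or.inl h
      · exact Or.inr ⟨rfl, fun d hd => Nat.lt_succ_of_lt (hall d hd)⟩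
    rw [if_pos h1, if_pos h1, if_pos h2]
    have hinv : (∑ᶠ k : Fin n → ℤ, coef j' k * dHaar n ε (K - j').toNat k
        (Flip n L ((K - j).toNat) m))
        = ∑ᶠ k : Fin n → ℤ, coef j' k * dHaar n ε (K - j').toNat k m := by
      refine finsum_congr fun k => ?_
      have hle : j' ≤ j := by rcases h2 with h | ⟨rfl, _⟩ <;> omega
      refine congrArg _ (dHaar_flip_inv n ε _ L _ k m (by omega) (fun ht => ?_))
      rcases h2 with h | ⟨rfl, hall⟩
      · omega
      · exact absurd (hall L ht) (lt_irrefl _)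
    rw [hinv]
    ring
  · by_cases h1 : incl n ε j' j ((L : ℕ) + 1)
    · have hkey : ε L = true ∧ j' = j := by
        rcases h1 with h | ⟨hjj, hall⟩
        · exact absurd (Or.inl h) h2
        · refine ⟨?_, hjj⟩
          by_contra hfalse
          refine h2 (Or.inr ⟨hjj, fun d hd => ?_⟩)
          rcases Nat.lt_succ_iff_lt_or_eq.1 (hall d hd) with h' | h'
          · exact h'
          · exact absurd hd (by rw [show d = L from Fin.ext h']; simpa using hfalse)
      obtain ⟨hεt, rfl⟩ := hkey
      rw [if_pos h1, if_pos h1, if_neg h2]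
      have hanti : (∑ᶠ k : Fin n → ℤ, coef j' k * dHaar n ε (K - j').toNat k
          (Flip n L ((K - j').toNat) m))
          = -∑ᶠ k : Fin n → ℤ, coef j' k * dHaar n ε (K - j').toNat k m := by
        rw [← finsum_neg_distrib]
        exact finsum_congr fun k => by
          rw [dHaar_flip_anti n ε L _ k m hεt]; ring
      rw [hanti]
      ring
    · rw [if_neg h1, if_neg h1, if_neg h2]
      ring

lemma gensum_J_zero (n : ℕ) (J K : ℤ) (ε : Fin n → Bool) (coef : ℤ → (Fin n → ℤ) → ℝ)
    (hex : ∃ d, ε d = true) (m : Fin n → ℤ) : gensum n J K ε coef J 0 m = 0 := by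
  unfold gensum
  refine Finset.sum_eq_zero fun j' hj' => ?_
  rw [Finset.mem_Icc] at hj'
  rw [if_neg]
  rintro (h | ⟨rfl, hall⟩)
  · omega
  · obtain ⟨d, hd⟩ := hex
    exact absurd (hall d hd) (Nat.not_lt_zero _)

lemma gensum_top (n : ℕ) (J K : ℤ) (ε : Fin n → Bool) (coef : ℤ → (Fin n → ℤ) → ℝ)
    (j : ℤ) (hex : ∃ d, ε d = true) (m : Fin n → ℤ) :
    gensum n J K ε coef j n m = gensum n J K ε coef (j + 1) 0 m := by
  unfold gensum
  refine Finset.sum_congr rfl fun j' _ => ?_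
  refine if_congr ?_ rfl rfl
  constructor
  · rintro (h | ⟨rfl, _⟩)
    · exact Or.inl (by omega)
    · exact Or.inl (by omega)
  · rintro (h | ⟨rfl, hall⟩)
    · rcases lt_or_eq_of_le (show j' ≤ j by omega) with h' | h'
      · exact Or.inl h'
      · exact Or.inr ⟨h', fun d _ => d.isLt⟩
    · obtain ⟨d, hd⟩ := hex
      exact absurd (hall d hd) (Nat.not_lt_zero _)

lemma gensum_full (n : ℕ) (J K : ℤ) (ε : Fin n → Bool) (coef : ℤ → (Fin n → ℤ) → ℝ)
    (m : Fin n → ℤ) :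
    gensum n J K ε coef (K + 1) 0 m
      = ∑ j' ∈ Finset.Icc J K, ∑ᶠ k : Fin n → ℤ, coef j' k * dHaar n ε (K - j').toNat k m := by
  unfold gensum
  refine Finset.sum_congr rfl fun j' hj' => ?_
  rw [Finset.mem_Icc] at hj'
  rw [if_pos (Or.inl (by omega))]

/-- vanishing of `gensum` far out -/
lemma gensum_vanish (n : ℕ) (J K : ℤ) (ε : Fin n → Bool) (coef : ℤ → (Fin n → ℤ) → ℝ)
    (R : ℕ) (hcoef : ∀ j' k, (∃ l, R < (k l).natAbs) → coef j' k = 0)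
    (j : ℤ) (l : ℕ) (m : Fin n → ℤ)
    (hm : ∃ l₀, (2 * (R : ℤ) + 2) * 2 ^ ((K - J).toNat + 1) ≤ |m l₀|) :
    gensum n J K ε coef j l m = 0 := by
  obtain ⟨l₀, hl₀⟩ := hm
  unfold gensum
  refine Finset.sum_eq_zero fun j' hj' => ?_
  rw [Finset.mem_Icc] at hj'
  split_ifs with h
  · refine finsum_eq_zero_of_forall_eq_zero fun k => ?_
    by_cases hk : ∃ l, R < (k l).natAbs
    · rw [hcoef j' k hk, zero_mul]
    · push_neg at hk
      have hk2 := hk l₀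
      have hj2 := hj'.1
      have hj3 := hj'.2
      have hee : (2:ℤ) ^ ((K - j').toNat) ≤ 2 ^ ((K - J).toNat + 1) :=
        pow_le_pow_right₀ (by norm_num) (by omega)
      have hee' : (2:ℤ) ^ ((K - j').toNat + 1) ≤ 2 ^ ((K - J).toNat + 1) :=
        pow_le_pow_right₀ (by norm_num) (by omega)
      have hRnn : (0:ℤ) ≤ (R:ℤ) := Int.natCast_nonneg R
      have habs : ¬ (|m l₀ / 2 ^ ((K - j').toNat)| ≤ 2 * (R:ℤ) + 1) := by
        intro habs
        have h5 := abs_lt_of_ediv (m l₀) _ _ habs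
        nlinarith
      have habs' : ¬ (|m l₀ / 2 ^ ((K - j').toNat + 1)| ≤ (R:ℤ)) := by
        intro habs
        have h5 := abs_lt_of_ediv (m l₀) _ _ habs
        have h6 : ((R:ℤ) + 1) * 2 ^ ((K - j').toNat + 1) ≤ ((R:ℤ) + 1) * 2 ^ ((K - J).toNat + 1) :=
          mul_le_mul_of_nonneg_left hee' (by omega)
        have h7 : ((R:ℤ) + 1) * 2 ^ ((K - J).toNat + 1) ≤ (2 * (R:ℤ) + 2) * 2 ^ ((K - J).toNat + 1) :=
          mul_le_mul_of_nonneg_right (by omega) (by positivity)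
        linarith
      have hz : (if ε l₀ then dh (K - j').toNat (k l₀) (m l₀)
          else dchi (K - j').toNat (k l₀) (m l₀)) = 0 := by
        by_cases hε : ε l₀
        · rw [if_pos hε]
          unfold dh dmo
          split_ifs with hc1 hc2
          · exact absurd (by rw [abs_le]; omega) habs
          · exact absurd (by rw [abs_le]; omega) habs
          · rfl
        · rw [if_neg hε]
          unfold dchi
          split_ifs with hc1
          · exact absurd (by rw [abs_le]; omega) habs'
          · rfl
      rw [show dHaar n ε (K - j').toNat k m = 0 from
        Finset.prod_eq_zero (Finset.mem_univ l₀) hz, mul_zero]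
  · rfl

end JHaux
namespace JHaux

def Efilter (n : ℕ) : Finset (Fin n → Bool) :=
  Finset.univ.filter (fun ε : Fin n → Bool =>
    (∃ l, ε l = true) ∧ ∀ l : Fin n, (l : ℕ) + 1 = n → ε l = false)

def epsN (n : ℕ) : Fin n → Bool := fun l => decide ((l : ℕ) + 1 = n)

def Usum (n : ℕ) (J K : ℤ) (a : (Fin n → Bool) → ℤ → (Fin n → ℤ) → Fin n → ℝ)
    (i : Fin n) (j : ℤ) (l : ℕ) (m : Fin n → ℤ) : ℝ :=
  ∑ ε ∈ Efilter n, gensum n J K ε (fun j' k => a ε j' k i) j l m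

def Vsum (n : ℕ) (J K : ℤ) (b : ℤ → (Fin n → ℤ) → ℝ) (j : ℤ) (l : ℕ) (m : Fin n → ℤ) : ℝ :=
  gensum n J K (epsN n) b j l m

def Nf (n : ℕ) (J K : ℤ) (a : (Fin n → Bool) → ℤ → (Fin n → ℤ) → Fin n → ℝ)
    (b : ℤ → (Fin n → ℤ) → ℝ) (j : ℤ) (l : ℕ) (m : Fin n → ℤ) :
    Matrix (Fin 2) (Fin n) ℝ :=
  Matrix.of fun p q =>
    if p = 0 then (if (q : ℕ) + 1 < n then Usum n J K a q j l m else 0)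
    else (if (q : ℕ) + 1 = n then Vsum n J K b j l m else 0)

section withvars

variable (n : ℕ) (J K : ℤ) (a : (Fin n → Bool) → ℤ → (Fin n → ℤ) → Fin n → ℝ)
  (b : ℤ → (Fin n → ℤ) → ℝ)

lemma mem_Efilter {ε : Fin n → Bool} (hε : ε ∈ Efilter n) :
    (∃ l, ε l = true) ∧ ∀ l : Fin n, (l : ℕ) + 1 = n → ε l = false :=
  (Finset.mem_filter.1 hε).2

lemma exists_epsN (hn : 0 < n) : ∃ d : Fin n, epsN n d = true :=
  ⟨⟨n - 1, by omega⟩, by simp only [epsN, decide_eq_true_eq]; omega⟩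

lemma Nf_J_zero (hn : 0 < n) (m : Fin n → ℤ) : Nf n J K a b J 0 m = 0 := by
  ext i q
  simp only [Nf, Matrix.of_apply, Matrix.zero_apply]
  split_ifs with h1 h2 h3
  · exact Finset.sum_eq_zero fun ε hε => gensum_J_zero n J K ε _ (mem_Efilter n hε).1 m
  · rfl
  · exact gensum_J_zero n J K (epsN n) b (exists_epsN n hn) m
  · rfl

lemma Nf_top (hn : 0 < n) (j : ℤ) (m : Fin n → ℤ) :
    Nf n J K a b j n m = Nf n J K a b (j + 1) 0 m := by
  ext i q
  simp only [Nf, Matrix.of_apply]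
  split_ifs with h1 h2 h3
  · exact Finset.sum_congr rfl fun ε hε =>
      gensum_top n J K ε _ j (mem_Efilter n hε).1 m
  · rfl
  · exact gensum_top n J K (epsN n) b j (exists_epsN n hn) m
  · rfl

lemma Nf_vanish (R : ℕ)
    (haR : ∀ ε j k i, (∃ l, R < (k l).natAbs) → a ε j k i = 0)
    (hbR : ∀ j k, (∃ l, R < (k l).natAbs) → b j k = 0)
    (j : ℤ) (l : ℕ) (m : Fin n → ℤ)
    (hm : ∃ l₀, (2 * (R : ℤ) + 2) * 2 ^ ((K - J).toNat + 1) ≤ |m l₀|) :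
    Nf n J K a b j l m = 0 := by
  ext i q
  simp only [Nf, Matrix.of_apply, Matrix.zero_apply]
  split_ifs with h1 h2 h3
  · exact Finset.sum_eq_zero fun ε hε =>
      gensum_vanish n J K ε _ R (fun j' k hk => haR ε j' k q hk) j l m hm
  · rfl
  · exact gensum_vanish n J K (epsN n) b R (fun j' k hk => hbR j' k hk) j l m hm
  · rfl

lemma Usum_succ_flip (i : Fin n) (j : ℤ) (hj : j ≤ K) (L : Fin n) (m : Fin n → ℤ) :
    Usum n J K a i j ((L : ℕ) + 1) (Flip n L ((K - j).toNat) m)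
      + Usum n J K a i j ((L : ℕ) + 1) m = 2 * Usum n J K a i j (L : ℕ) m := by
  unfold Usum
  rw [← Finset.sum_add_distrib, Finset.mul_sum]
  exact Finset.sum_congr rfl fun ε _ => gensum_succ_flip n J K ε _ j hj L m

lemma Vsum_succ_flip (j : ℤ) (hj : j ≤ K) (L : Fin n) (m : Fin n → ℤ) :
    Vsum n J K b j ((L : ℕ) + 1) (Flip n L ((K - j).toNat) m)
      + Vsum n J K b j ((L : ℕ) + 1) m = 2 * Vsum n J K b j (L : ℕ) m :=
  gensum_succ_flip n J K (epsN n) b j hj L m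

lemma Nf_succ_flip (j : ℤ) (hj : j ≤ K) (L : Fin n) (m : Fin n → ℤ) :
    Nf n J K a b j ((L : ℕ) + 1) (Flip n L ((K - j).toNat) m)
      + Nf n J K a b j ((L : ℕ) + 1) m = (2 : ℝ) • Nf n J K a b j (L : ℕ) m := by
  ext i q
  simp only [Nf, Matrix.add_apply, Matrix.smul_apply, Matrix.of_apply, smul_eq_mul]
  split_ifs with h1 h2 h3
  · exact Usum_succ_flip n J K a q j hj L m
  · ring
  · exact Vsum_succ_flip n J K b j hj L m
  · ring

lemma Usum_flip_inv_last (i : Fin n) (j : ℤ) (hj : j ≤ K) (L : Fin n)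
    (hL : (L : ℕ) + 1 = n) (l' : ℕ) (m : Fin n → ℤ) :
    Usum n J K a i j l' (Flip n L ((K - j).toNat) m) = Usum n J K a i j l' m := by
  unfold Usum
  exact Finset.sum_congr rfl fun ε hε =>
    gensum_flip_inv n J K ε _ j hj L ((mem_Efilter n hε).2 L hL) l' m

lemma Vsum_flip_inv (j : ℤ) (hj : j ≤ K) (L : Fin n) (hL : (L : ℕ) + 1 ≠ n)
    (l' : ℕ) (m : Fin n → ℤ) :
    Vsum n J K b j l' (Flip n L ((K - j).toNat) m) = Vsum n J K b j l' m :=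
  gensum_flip_inv n J K (epsN n) b j hj L (by simp [epsN, hL]) l' m

lemma rank_le_one_row (X : Matrix (Fin 2) (Fin n) ℝ) (i₀ : Fin 2)
    (h : ∀ (i : Fin 2) (q : Fin n), i ≠ i₀ → X i q = 0) : X.rank ≤ 1 := by
  have hr : LinearMap.range X.mulVecLin ≤
      Submodule.span ℝ {Pi.single i₀ (1 : ℝ)} := by
    rintro w ⟨v, rfl⟩
    rw [Submodule.mem_span_singleton]
    refine ⟨X.mulVecLin v i₀, funext fun i => ?_⟩
    by_cases hi : i = i₀
    · subst hi; simp
    · have hz : X.mulVecLin v i = 0 := by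
        simp only [Matrix.mulVecLin_apply, Matrix.mulVec, dotProduct]
        exact Finset.sum_eq_zero fun q _ => by simp [h i q hi]
      simp [Pi.single_eq_of_ne hi, hz]
  have h1 : Module.finrank ℝ
      (Submodule.span ℝ {Pi.single i₀ (1 : ℝ)} : Submodule ℝ (Fin 2 → ℝ)) ≤ 1 := by
    by_cases hv : (Pi.single i₀ (1 : ℝ) : Fin 2 → ℝ) = 0
    · rw [hv, Submodule.span_zero_singleton]; simp
    · rw [finrank_span_singleton hv]
  exact le_trans (Submodule.finrank_mono hr) h1

lemma Nf_diff_rank (j : ℤ) (hj : j ≤ K) (L : Fin n) (m : Fin n → ℤ) :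
    (Nf n J K a b j ((L : ℕ) + 1) (Flip n L ((K - j).toNat) m)
      - Nf n J K a b j ((L : ℕ) + 1) m).rank ≤ 1 := by
  by_cases hL : (L : ℕ) + 1 = n
  · refine rank_le_one_row n _ 1 fun i q hi => ?_
    have hi0 : i = 0 := by omega
    subst hi0
    simp only [Matrix.sub_apply, Nf, Matrix.of_apply, if_true]
    by_cases h1 : (q : ℕ) + 1 < n
    · rw [if_pos h1, if_pos h1, Usum_flip_inv_last n J K a q j hj L hL, sub_self]
    · rw [if_neg h1, if_neg h1, sub_self]
  · refine rank_le_one_row n _ 0 fun i q hi => ?_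
    have hi1 : i = 1 := by omega
    subst hi1
    have hne : ((1 : Fin 2) = 0) = False := by simp
    simp only [Matrix.sub_apply, Nf, Matrix.of_apply, hne, if_false]
    by_cases h1 : (q : ℕ) + 1 = n
    · rw [if_pos h1, if_pos h1, Vsum_flip_inv n J K b j hj L hL, sub_self]
    · rw [if_neg h1, if_neg h1, sub_self]

end withvars

end JHaux
namespace JHaux

lemma finsum_le_finsum' {ι : Type*} {u v : ι → ℝ} (h : ∀ i, u i ≤ v i)
    (hu : (Function.support u).Finite) (hv : (Function.support v).Finite) :
    ∑ᶠ i, u i ≤ ∑ᶠ i, v i := by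
  classical
  have hs : (Function.support u ∪ Function.support v).Finite := hu.union hv
  have h1 : Function.support u ⊆ ↑hs.toFinset := by
    intro i hi; rw [Set.Finite.coe_toFinset]; exact Or.inl hi
  have h2 : Function.support v ⊆ ↑hs.toFinset := by
    intro i hi; rw [Set.Finite.coe_toFinset]; exact Or.inr hi
  rw [finsum_eq_finset_sum_of_support_subset u h1,
    finsum_eq_finset_sum_of_support_subset v h2]
  exact Finset.sum_le_sum fun i _ => h i

section chain

variable (n : ℕ) (J K : ℤ) (a : (Fin n → Bool) → ℤ → (Fin n → ℤ) → Fin n → ℝ)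
  (b : ℤ → (Fin n → ℤ) → ℝ) (f : Matrix (Fin 2) (Fin n) ℝ → ℝ) (R : ℕ)

lemma support_fNf (hf0 : f 0 = 0)
    (haR : ∀ ε j k i, (∃ l, R < (k l).natAbs) → a ε j k i = 0)
    (hbR : ∀ j k, (∃ l, R < (k l).natAbs) → b j k = 0)
    (j : ℤ) (l : ℕ) :
    (Function.support fun m => f (Nf n J K a b j l m)).Finite := by
  set A := (2 * (R : ℤ) + 2) * 2 ^ ((K - J).toNat + 1) with hA
  have hfin : ({ m : Fin n → ℤ | ∀ i, m i ∈ Set.Icc (-A) A }).Finite :=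
    Set.Finite.pi' fun _ => Set.finite_Icc _ _
  refine hfin.subset fun m hm => ?_
  rw [Function.mem_support] at hm
  simp only [Set.mem_setOf_eq, Set.mem_Icc]
  intro l₀
  by_contra hcon
  have habs : A ≤ |m l₀| := by
    rw [Int.abs_eq_natAbs]
    push_neg at hcon
    omega
  exact hm (by rw [Nf_vanish n J K a b R haR hbR j l m ⟨l₀, habs⟩, hf0])

lemma Sstep (hf : IsRankOneConvex f) (hf0 : f 0 = 0)
    (haR : ∀ ε j k i, (∃ l, R < (k l).natAbs) → a ε j k i = 0)
    (hbR : ∀ j k, (∃ l, R < (k l).natAbs) → b j k = 0)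
    (j : ℤ) (hj : j ≤ K) (l : ℕ) (hl : l < n) :
    (∑ᶠ m : Fin n → ℤ, f (Nf n J K a b j l m))
      ≤ ∑ᶠ m : Fin n → ℤ, f (Nf n J K a b j (l + 1) m) := by
  set L : Fin n := ⟨l, hl⟩ with hLdef
  set d := (K - j).toNat with hd
  set σ := Flip n L d with hσdef
  have hinv : Function.Involutive σ := Flip_invol n L d
  have hbij : Function.Bijective σ := hinv.bijective
  have hsupf := support_fNf n J K a b f R hf0 haR hbR j (l + 1)
  have hsupl := support_fNf n J K a b f R hf0 haR hbR j l
  have hsupσ : (Function.support fun m => f (Nf n J K a b j (l + 1) (σ m))).Finite := by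
    have hco : (fun m => f (Nf n J K a b j (l + 1) (σ m)))
        = (fun m => f (Nf n J K a b j (l + 1) m)) ∘ σ := rfl
    rw [hco, Function.support_comp_eq_preimage]
    exact hsupf.preimage (hbij.injective.injOn)
  have hpt : ∀ m, f (Nf n J K a b j l m) ≤
      (1 / 2) * f (Nf n J K a b j (l + 1) (σ m))
        + (1 / 2) * f (Nf n J K a b j (l + 1) m) := by
    intro m
    have hmid := Nf_succ_flip n J K a b j hj L m
    have hrank := Nf_diff_rank n J K a b j hj L m
    have hjen := hf (Nf n J K a b j ((L : ℕ) + 1) (σ m)) (Nf n J K a b j ((L : ℕ) + 1) m)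
      hrank (1 / 2) ⟨by norm_num, by norm_num⟩
    have hmid2 : (1 / 2 : ℝ) • Nf n J K a b j ((L : ℕ) + 1) (σ m)
        + (1 - 1 / 2 : ℝ) • Nf n J K a b j ((L : ℕ) + 1) m
        = Nf n J K a b j (L : ℕ) m := by
      rw [show (1 - 1 / 2 : ℝ) = 1 / 2 by norm_num, ← smul_add, hmid, smul_smul]
      norm_num
    rw [hmid2] at hjen
    rw [show (1 - 1 / 2 : ℝ) = 1 / 2 by norm_num] at hjen
    exact hjen
  have hsup1 : (Function.support fun m =>
      (1 / 2) * f (Nf n J K a b j (l + 1) (σ m))).Finite := by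
    refine hsupσ.subset fun m hm => ?_
    rw [Function.mem_support] at hm ⊢
    intro hzero
    exact hm (by rw [hzero, mul_zero])
  have hsup2 : (Function.support fun m =>
      (1 / 2) * f (Nf n J K a b j (l + 1) m)).Finite := by
    refine hsupf.subset fun m hm => ?_
    rw [Function.mem_support] at hm ⊢
    intro hzero
    exact hm (by rw [hzero, mul_zero])
  calc (∑ᶠ m : Fin n → ℤ, f (Nf n J K a b j l m))
      ≤ ∑ᶠ m : Fin n → ℤ, ((1 / 2) * f (Nf n J K a b j (l + 1) (σ m))
          + (1 / 2) * f (Nf n J K a b j (l + 1) m)) := by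
        refine finsum_le_finsum' hpt hsupl ?_
        refine Set.Finite.subset (hsup1.union hsup2) fun m hm => ?_
        rw [Function.mem_support] at hm
        by_contra hmem
        simp only [Set.mem_union, Function.mem_support, not_or, not_not] at hmem
        exact hm (by rw [hmem.1, hmem.2, add_zero])
    _ = (∑ᶠ m : Fin n → ℤ, (1 / 2) * f (Nf n J K a b j (l + 1) (σ m)))
          + ∑ᶠ m : Fin n → ℤ, (1 / 2) * f (Nf n J K a b j (l + 1) m) :=
        finsum_add_distrib hsup1 hsup2
    _ = (1 / 2) * (∑ᶠ m : Fin n → ℤ, f (Nf n J K a b j (l + 1) (σ m)))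
          + (1 / 2) * ∑ᶠ m : Fin n → ℤ, f (Nf n J K a b j (l + 1) m) := by
        simp only [← smul_eq_mul, ← smul_finsum]
    _ = (1 / 2) * (∑ᶠ m : Fin n → ℤ, f (Nf n J K a b j (l + 1) m))
          + (1 / 2) * ∑ᶠ m : Fin n → ℤ, f (Nf n J K a b j (l + 1) m) := by
        have hreindex : (∑ᶠ m : Fin n → ℤ, f (Nf n J K a b j (l + 1) (σ m)))
            = ∑ᶠ m : Fin n → ℤ, f (Nf n J K a b j (l + 1) m) :=
          finsum_eq_of_bijective σ hbij (fun m => rfl)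
        rw [hreindex]
    _ = ∑ᶠ m : Fin n → ℤ, f (Nf n J K a b j (l + 1) m) := by ring

lemma SchainL (hf : IsRankOneConvex f) (hf0 : f 0 = 0)
    (haR : ∀ ε j k i, (∃ l, R < (k l).natAbs) → a ε j k i = 0)
    (hbR : ∀ j k, (∃ l, R < (k l).natAbs) → b j k = 0)
    (j : ℤ) (hj : j ≤ K) :
    ∀ l : ℕ, l ≤ n → (∑ᶠ m : Fin n → ℤ, f (Nf n J K a b j 0 m))
      ≤ ∑ᶠ m : Fin n → ℤ, f (Nf n J K a b j l m) := by
  intro l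
  induction l with
  | zero => intro _; exact le_refl _
  | succ l ih =>
    intro hln
    exact le_trans (ih (by omega))
      (Sstep n J K a b f R hf hf0 haR hbR j hj l (by omega))

lemma Schain (hn : 2 ≤ n) (hf : IsRankOneConvex f) (hf0 : f 0 = 0)
    (haR : ∀ ε j k i, (∃ l, R < (k l).natAbs) → a ε j k i = 0)
    (hbR : ∀ j k, (∃ l, R < (k l).natAbs) → b j k = 0) :
    0 ≤ ∑ᶠ m : Fin n → ℤ, f (Nf n J K a b (K + 1) 0 m) := by
  by_cases hJK : J ≤ K
  · have base : (∑ᶠ m : Fin n → ℤ, f (Nf n J K a b J 0 m)) = 0 :=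
      finsum_eq_zero_of_forall_eq_zero fun m => by
        rw [Nf_J_zero n J K a b (by omega) m, hf0]
    have step : ∀ i : ℕ, J + (i : ℤ) ≤ K + 1 →
        (∑ᶠ m : Fin n → ℤ, f (Nf n J K a b J 0 m))
          ≤ ∑ᶠ m : Fin n → ℤ, f (Nf n J K a b (J + (i : ℤ)) 0 m) := by
      intro i
      induction i with
      | zero => intro _; simp
      | succ i ih =>
        intro hi
        push_cast at hi
        have h1 := ih (by omega)
        have h2 := SchainL n J K a b f R hf hf0 haR hbR (J + (i : ℤ)) (by omega) n le_rfl
        have h3 : (∑ᶠ m : Fin n → ℤ, f (Nf n J K a b (J + (i : ℤ)) n m))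
            = ∑ᶠ m : Fin n → ℤ, f (Nf n J K a b (J + ((i : ℤ) + 1)) 0 m) :=
          finsum_congr fun m => by
            rw [Nf_top n J K a b (by omega) (J + (i : ℤ)) m]
            norm_num [add_assoc]
        have h4 : J + ((i + 1 : ℕ) : ℤ) = J + ((i : ℤ) + 1) := by push_cast; ring
        rw [h4]
        exact le_trans (le_trans h1 h2) (le_of_eq h3)
    have hfin := step (K + 1 - J).toNat (by omega)
    rw [show J + ((K + 1 - J).toNat : ℤ) = K + 1 by omega] at hfin
    linarith
  · have hz : ∀ m : Fin n → ℤ, Nf n J K a b (K + 1) 0 m = 0 := by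
      intro m
      ext i q
      have hIcc : Finset.Icc J K = ∅ := Finset.Icc_eq_empty (by omega)
      simp only [Nf, Matrix.of_apply, Matrix.zero_apply, Usum, Vsum, gensum, hIcc,
        Finset.sum_empty]
      split_ifs <;> simp
    rw [finsum_eq_zero_of_forall_eq_zero fun m => by rw [hz m, hf0]]

end chain

end JHaux
namespace JHaux

open MeasureTheory

section integral

variable (n : ℕ)

lemma cube_eq (c : ℝ) (hc : 0 < c) (m : Fin n → ℤ) (x : Fin n → ℝ) :
    x ∈ Set.pi Set.univ (fun l => Set.Ico ((m l : ℝ) / c) (((m l : ℝ) + 1) / c))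
      ↔ (fun l => ⌊c * x l⌋) = m := by
  simp only [Set.mem_pi, Set.mem_univ, forall_true_left, Set.mem_Ico, funext_iff]
  refine forall_congr' fun l => ?_
  rw [div_le_iff₀ hc, lt_div_iff₀ hc, Int.floor_eq_iff]
  constructor <;> rintro ⟨h1, h2⟩ <;>
    exact ⟨by nlinarith [mul_comm c (x l)], by nlinarith [mul_comm c (x l)]⟩

lemma integral_floor_comp (c : ℝ) (hc : 0 < c) (F : (Fin n → ℤ) → ℝ)
    (hF : (Function.support F).Finite) :
    ∫ x : Fin n → ℝ, F (fun l => ⌊c * x l⌋)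
      = (1 / c) ^ n * ∑ᶠ m : Fin n → ℤ, F m := by
  classical
  set T := hF.toFinset with hT
  have hTc : Function.support F ⊆ ↑T := by rw [Set.Finite.coe_toFinset]
  set cube : (Fin n → ℤ) → Set (Fin n → ℝ) :=
    fun m => Set.pi Set.univ (fun l => Set.Ico ((m l : ℝ) / c) (((m l : ℝ) + 1) / c)) with hcube
  have hmeas : ∀ m, MeasurableSet (cube m) :=
    fun m => MeasurableSet.univ_pi fun l => measurableSet_Ico
  have hvol : ∀ m, volume (cube m) = ENNReal.ofReal (1 / c) ^ n := by
    intro m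
    rw [hcube]
    rw [Real.volume_pi_Ico]
    have hgap : ∀ l : Fin n, ((m l : ℝ) + 1) / c - (m l : ℝ) / c = 1 / c := by
      intro l; field_simp; ring
    calc (∏ l : Fin n, ENNReal.ofReal (((m l : ℝ) + 1) / c - (m l : ℝ) / c))
        = ∏ _l : Fin n, ENNReal.ofReal (1 / c) :=
          Finset.prod_congr rfl fun l _ => by rw [hgap l]
      _ = ENNReal.ofReal (1 / c) ^ n := by
          rw [Finset.prod_const, Finset.card_univ, Fintype.card_fin]
  have hpt : (fun x : Fin n → ℝ => F (fun l => ⌊c * x l⌋))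
      = fun x => ∑ m ∈ T, Set.indicator (cube m) (fun _ => F m) x := by
    funext x
    have hcongr : ∀ m ∈ T, Set.indicator (cube m) (fun _ => F m) x
        = if (fun l => ⌊c * x l⌋) = m then F m else 0 := by
      intro m _
      rw [Set.indicator_apply]
      exact if_congr (cube_eq n c hc m x) rfl rfl
    rw [Finset.sum_congr rfl hcongr, Finset.sum_ite_eq T (fun l => ⌊c * x l⌋) (fun m => F m)]
    split_ifs with hmem
    · rfl
    · by_contra hne
      exact hmem (hTc (Function.mem_support.2 fun h => hne h))
  rw [hpt, integral_finset_sum]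
  · have hterm : ∀ m ∈ T, (∫ x : Fin n → ℝ, Set.indicator (cube m) (fun _ => F m) x)
        = (1 / c) ^ n * F m := by
      intro m _
      rw [integral_indicator_const (F m) (hmeas m), measureReal_def, hvol m, smul_eq_mul]
      congr 1
      rw [ENNReal.toReal_pow, ENNReal.toReal_ofReal (by positivity)]
    rw [Finset.sum_congr rfl hterm, ← Finset.mul_sum,
      finsum_eq_finset_sum_of_support_subset F hTc]
  · intro m _
    refine (integrable_indicator_iff (hmeas m)).2 ?_
    refine integrableOn_const (ne_of_lt ?_)
    rw [hvol m]
    exact ENNReal.pow_lt_top (ENNReal.ofReal_lt_top)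

end integral

end JHaux

/-- Jensen-type inequality for rank-one convex `f` with `f(0)=0` applied to matrix fields
built from finite Haar expansions: the first-row entries `u_i` (`i ≤ n−1`) are combinations
of Haar functions `h^{(ε)}_{j,k}` with `ε ≠ 0`, `ε_n = 0`, and the `(2,n)` entry `v_n` is a
combination of Haar functions with `ε = e_n`; all coefficients vanish for `|k|` large. -/
theorem jensen_for_haar_expansions (n : ℕ) (hn : 2 ≤ n)
    (f : Matrix (Fin 2) (Fin n) ℝ → ℝ) (hf : IsRankOneConvex f) (hf0 : f 0 = 0)
    (J K : ℤ)
    (a : (Fin n → Bool) → ℤ → (Fin n → ℤ) → Fin n → ℝ)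
    (b : ℤ → (Fin n → ℤ) → ℝ)
    (R : ℕ)
    (haR : ∀ ε j k i, (∃ l, R < (k l).natAbs) → a ε j k i = 0)
    (hbR : ∀ j k, (∃ l, R < (k l).natAbs) → b j k = 0)
    (u : Fin n → (Fin n → ℝ) → ℝ)
    (hu : ∀ i : Fin n, (i : ℕ) + 1 < n → ∀ x, u i x =
      ∑ ε ∈ Finset.univ.filter (fun ε : Fin n → Bool =>
          (∃ l, ε l = true) ∧ ∀ l : Fin n, (l : ℕ) + 1 = n → ε l = false),
        ∑ j ∈ Finset.Icc J K, ∑ᶠ k : Fin n → ℤ, a ε j k i * haarND n ε j k x)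
    (v : (Fin n → ℝ) → ℝ)
    (hv : ∀ x, v x = ∑ j ∈ Finset.Icc J K,
      ∑ᶠ k : Fin n → ℤ, b j k * haarND n (fun l => decide ((l : ℕ) + 1 = n)) j k x) :
    0 ≤ ∫ x : Fin n → ℝ, f (Matrix.of fun p q =>
      if p = 0 then (if (q : ℕ) + 1 < n then u q x else 0)
      else (if (q : ℕ) + 1 = n then v x else 0)) := by
  classical
  have hc : (0:ℝ) < (2:ℝ) ^ (K + 1) := zpow_pos (by norm_num) _
  have hGsup : (Function.support fun m : Fin n → ℤ =>
      f (JHaux.Nf n J K a b (K + 1) 0 m)).Finite :=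
    JHaux.support_fNf n J K a b f R hf0 haR hbR (K + 1) 0
  have hintegrand : ∀ x : Fin n → ℝ,
      f (Matrix.of fun p q =>
        if p = 0 then (if (q : ℕ) + 1 < n then u q x else 0)
        else (if (q : ℕ) + 1 = n then v x else 0))
      = f (JHaux.Nf n J K a b (K + 1) 0 (fun l => ⌊(2:ℝ) ^ (K + 1) * x l⌋)) := by
    intro x
    congr 1
    ext p q
    simp only [Matrix.of_apply, JHaux.Nf]
    by_cases hp : p = 0
    · rw [if_pos hp, if_pos hp]
      by_cases hq : (q : ℕ) + 1 < n
      · rw [if_pos hq, if_pos hq, hu q hq x, JHaux.Usum]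
        refine Finset.sum_congr rfl fun ε hε => ?_
        rw [JHaux.gensum_full n J K ε (fun j' k => a ε j' k q)]
        refine Finset.sum_congr rfl fun j' hj' => finsum_congr fun k => ?_
        rw [JHaux.haarND_eq n ε K j' (Finset.mem_Icc.1 hj').2 k x]
      · rw [if_neg hq, if_neg hq]
    · rw [if_neg hp, if_neg hp]
      by_cases hq : (q : ℕ) + 1 = n
      · rw [if_pos hq, if_pos hq, hv x, JHaux.Vsum, JHaux.gensum_full n J K (JHaux.epsN n) b]
        refine Finset.sum_congr rfl fun j' hj' => finsum_congr fun k => ?_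
        rw [JHaux.haarND_eq n (fun l => decide ((l : ℕ) + 1 = n)) K j'
          (Finset.mem_Icc.1 hj').2 k x]
        rfl
      · rw [if_neg hq, if_neg hq]
  simp only [hintegrand]
  rw [JHaux.integral_floor_comp n ((2:ℝ) ^ (K + 1)) hc
    (fun m => f (JHaux.Nf n J K a b (K + 1) 0 m)) hGsup]
  have hge := JHaux.Schain n J K a b f R hn hf hf0 haR hbR
  have hpos : (0:ℝ) ≤ (1 / (2:ℝ) ^ (K + 1)) ^ n := by positivity
  exact mul_nonneg hpos hge

end
end

section
/- Let Ω ⊆ ℝ² be a nonempty bounded open set, let A ∈ ℝ^{2×2} with A₁₂ > 0, and let φ ∈ C_c^∞(Ω, ℝ²) be such that (A + Dφ(x))₁₂ > 0 for all x ∈ Ω. Set ψ(x) = Ax + φ(x) (extended by ψ(x) = Ax outside Ω) and T₁(x) = (x₁, ψ₁(x)). Then T₁ is injective on Ω, T₁(Ω) is a bounded open set, and the Lebesgue measure of T₁(Ω) equals A₁₂ · |Ω|, where |Ω| is the Lebesgue measure of Ω. -/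
open MeasureTheory

noncomputable section

/-- For `ψ(x) = Ax + φ(x)` with `A₁₂ > 0` and `(A + Dφ)₁₂ > 0` on `Ω`, the map
`T₁(x) = (x₁, ψ₁(x))` is injective on `Ω`, `T₁(Ω)` is bounded and open, and
`|T₁(Ω)| = A₁₂·|Ω|`. -/
theorem partial_legendre_change_of_variables
    (Ω : Set (Fin 2 → ℝ)) (hΩo : IsOpen Ω) (hΩne : Ω.Nonempty)
    (hΩb : Bornology.IsBounded Ω)
    (A : Matrix (Fin 2) (Fin 2) ℝ) (hA : 0 < A 0 1)
    (φ : (Fin 2 → ℝ) → (Fin 2 → ℝ)) (hφ : ContDiff ℝ (⊤ : ℕ∞) φ)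
    (hφc : HasCompactSupport φ) (hφΩ : tsupport φ ⊆ Ω)
    (hpos : ∀ x ∈ Ω, 0 < (A + jacobianM 2 2 φ x) 0 1)
    (ψ : (Fin 2 → ℝ) → (Fin 2 → ℝ)) (hψ : ∀ x, ψ x = A.mulVec x + φ x)
    (T₁ : (Fin 2 → ℝ) → (Fin 2 → ℝ)) (hT₁ : ∀ x, T₁ x = ![x 0, ψ x 0]) :
    Set.InjOn T₁ Ω ∧ IsOpen (T₁ '' Ω) ∧ Bornology.IsBounded (T₁ '' Ω) ∧
      volume (T₁ '' Ω) = ENNReal.ofReal (A 0 1) * volume Ω := by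
  classical
  have hφd : Differentiable ℝ φ := hφ.differentiable (by simp)
  set e₁ : Fin 2 → ℝ := Pi.single 1 1 with he₁
  set D : (Fin 2 → ℝ) → ((Fin 2 → ℝ) →L[ℝ] (Fin 2 → ℝ)) := fun x => fderiv ℝ φ x with hD
  -- eta for Fin 2 vectors
  have eta : ∀ z : Fin 2 → ℝ, ![z 0, z 1] = z := by
    intro z; funext i; fin_cases i <;> rfl
  -- global positivity
  have key : ∀ x, 0 < A 0 1 + D x e₁ 0 := by
    intro x
    by_cases hx : x ∈ Ω
    · have := hpos x hx
      simpa [jacobianM, Matrix.add_apply, D, e₁] using this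
    · have hxt : x ∉ tsupport φ := fun h => hx (hφΩ h)
      have : D x = 0 := fderiv_of_notMem_tsupport ℝ hxt
      simpa [this] using hA
  -- CLMs
  set pr0 : (Fin 2 → ℝ) →L[ℝ] ℝ := ContinuousLinearMap.proj 0 with hpr0
  set pr1 : (Fin 2 → ℝ) →L[ℝ] ℝ := ContinuousLinearMap.proj 1 with hpr1
  set mvA : (Fin 2 → ℝ) →L[ℝ] (Fin 2 → ℝ) := LinearMap.toContinuousLinearMap A.mulVecLin
    with hmvA
  set N : (Fin 2 → ℝ) →L[ℝ] (Fin 2 → ℝ) := ContinuousLinearMap.pi ![pr0, pr0.comp mvA] with hN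
  set Ecl : (Fin 2 → ℝ) →L[ℝ] (Fin 2 → ℝ) := ContinuousLinearMap.pi ![0, pr0] with hEcl
  set T : (Fin 2 → ℝ) → (Fin 2 → ℝ) := fun x => N x + Ecl (φ x) with hT
  have hN0 : ∀ x : Fin 2 → ℝ, N x 0 = x 0 := by intro x; simp [hN, hpr0]
  have hN1 : ∀ x : Fin 2 → ℝ, N x 1 = A.mulVec x 0 := by intro x; simp [hN, hpr0, hmvA]
  have hE0 : ∀ w : Fin 2 → ℝ, Ecl w 0 = 0 := by intro w; simp [hEcl]
  have hE1 : ∀ w : Fin 2 → ℝ, Ecl w 1 = w 0 := by intro w; simp [hEcl, hpr0]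
  have hTT : T₁ = T := by
    funext x
    rw [hT₁, hψ]
    funext i
    fin_cases i
    · show x 0 = T x 0
      simp [hT, hN0, hE0]
    · show (A.mulVec x + φ x) 0 = T x 1
      simp [hT, hN1, hE1]
  -- derivative of T
  set L : (Fin 2 → ℝ) → ((Fin 2 → ℝ) →L[ℝ] (Fin 2 → ℝ)) := fun x => N + Ecl.comp (D x) with hL
  have hTd : ∀ x, HasFDerivAt T (L x) x := by
    intro x
    exact N.hasFDerivAt.add ((Ecl.hasFDerivAt).comp x (hφd x).hasFDerivAt)
  have hLe₁ : ∀ x, L x e₁ 1 = A 0 1 + D x e₁ 0 := by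
    intro x
    have : A.mulVec e₁ 0 = A 0 1 := by simp [e₁, Matrix.mulVec_single]
    simp [hL, hN1, hE1, this]
  have hLdet : ∀ x, (L x).det = A 0 1 + D x e₁ 0 := by
    intro x
    have h1 : (L x).det = LinearMap.det ((L x : (Fin 2 → ℝ) →ₗ[ℝ] (Fin 2 → ℝ))) := rfl
    rw [h1, ← LinearMap.det_toMatrix' ((L x : (Fin 2 → ℝ) →ₗ[ℝ] (Fin 2 → ℝ))),
      Matrix.det_fin_two]
    have hs0 : (fun j' : Fin 2 => if j' = 0 then (1:ℝ) else 0) = Pi.single 0 1 := by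
      funext j; rw [Pi.single_apply]
    have hs1 : (fun j' : Fin 2 => if j' = 1 then (1:ℝ) else 0) = e₁ := by
      funext j; rw [he₁, Pi.single_apply]
    simp only [LinearMap.toMatrix'_apply, ContinuousLinearMap.coe_coe, hs0, hs1]
    have h00 : L x (Pi.single 0 1) 0 = 1 := by
      simp [hL, hN0, hE0]
    have h01 : L x e₁ 0 = 0 := by
      simp [hL, hN0, hE0, e₁]
    rw [h00, h01, hLe₁]
    ring
  -- injectivity (global)
  have hinj : Function.Injective T := by
    intro a b hab
    have h0 : a 0 = b 0 := by
      have := congrFun hab 0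
      simpa [hT, hN0, hE0] using this
    -- the strictly monotone slice function
    set c : ℝ → (Fin 2 → ℝ) := fun t => ![a 0, 0] + t • e₁ with hc
    set u : ℝ → ℝ := fun t => T (c t) 1 with hu
    have hcd : ∀ t, HasDerivAt c e₁ t := by
      intro t
      have : HasDerivAt (fun t : ℝ => t • e₁) ((1:ℝ) • e₁) t :=
        (hasDerivAt_id t).smul_const e₁
      simpa [hc, one_smul] using this.const_add ![a 0, 0]
    have hud : ∀ t, HasDerivAt u (L (c t) e₁ 1) t := by
      intro t
      have h1 : HasFDerivAt (fun z => T z 1) (pr1.comp (L (c t))) (c t) :=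
        pr1.hasFDerivAt.comp (c t) (hTd (c t))
      exact h1.comp_hasDerivAt t (hcd t)
    have hmono : StrictMono u := by
      apply strictMono_of_deriv_pos
      intro t
      rw [(hud t).deriv, hLe₁]
      exact key (c t)
    have hc0 : ∀ t, c t = ![a 0, t] := by
      intro t; funext i; fin_cases i <;>
        simp [hc, he₁, Pi.single_apply, Matrix.vecHead, Matrix.vecTail, Function.comp]
    have h1 : a 1 = b 1 := by
      apply hmono.injective
      have hua : u (a 1) = T a 1 := by
        rw [hu]; exact congrArg (fun z => T z 1) ((hc0 (a 1)).trans (eta a))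
      have hub : u (b 1) = T b 1 := by
        rw [hu]
        refine congrArg (fun z => T z 1) ?_
        rw [hc0, h0, eta b]
      rw [hua, hub, hab]
    have : a = ![a 0, a 1] := (eta a).symm
    rw [this, h0, h1, eta b]
  -- continuity / smoothness of T
  have hTsm : ContDiff ℝ (⊤ : ℕ∞) T := by
    exact N.contDiff.add (Ecl.contDiff.comp hφ)
  have hTcont : Continuous T := hTsm.continuous
  -- openness
  have hopen : IsOpen (T '' Ω) := by
    rw [isOpen_iff_mem_nhds]
    rintro y ⟨x, hx, rfl⟩
    have hdet0 : (L x).det ≠ 0 := by rw [hLdet]; exact (key x).ne'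
    set eL := (L x).toContinuousLinearEquivOfDetNeZero hdet0 with heL
    have hstrict : HasStrictFDerivAt T (L x) x := by
      have h1 : HasStrictFDerivAt T (fderiv ℝ T x) x :=
        (hTsm.contDiffAt).hasStrictFDerivAt (by simp)
      rwa [(hTd x).fderiv] at h1
    have hstrict' : HasStrictFDerivAt T (eL : (Fin 2 → ℝ) →L[ℝ] (Fin 2 → ℝ)) x := by
      rwa [heL, ContinuousLinearMap.coe_toContinuousLinearEquivOfDetNeZero]
    have hmap := hstrict'.map_nhds_eq_of_equiv
    rw [← hmap]
    exact Filter.image_mem_map (hΩo.mem_nhds hx)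
  -- boundedness
  have hbdd : Bornology.IsBounded (T '' Ω) := by
    have hK : IsCompact (closure Ω) := hΩb.isCompact_closure
    have := (hK.image hTcont).isBounded
    exact this.subset (Set.image_mono subset_closure)
  -- measure computation
  have hvolfin : volume Ω < ⊤ := hΩb.measure_lt_top
  set h : (Fin 2 → ℝ) → ℝ := fun x => D x e₁ 0 with hh
  set g : (Fin 2 → ℝ) → ℝ := fun x => φ x 0 with hg
  have hgsm : ContDiff ℝ (⊤ : ℕ∞) g := pr0.contDiff.comp hφ
  have hgcs : HasCompactSupport g := hφc.comp_left (g := fun w : Fin 2 → ℝ => w 0) rfl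
  have hgd : Differentiable ℝ g := hgsm.differentiable (by simp)
  have hgfd : ∀ x, fderiv ℝ g x = pr0.comp (D x) := by
    intro x
    exact (pr0.hasFDerivAt.comp x (hφd x).hasFDerivAt).fderiv
  have hhg : h = fun x => fderiv ℝ g x e₁ := by
    funext x; rw [hgfd]; rfl
  -- h is continuous with compact support
  have hhcont : Continuous h := by
    have h1 : Continuous (fderiv ℝ g) := hgsm.continuous_fderiv (by simp)
    rw [hhg]
    exact (ContinuousLinearMap.apply ℝ ℝ e₁).continuous.comp h1
  have hhcs : HasCompactSupport h := by
    rw [hhg]; exact hgcs.fderiv_apply ℝ e₁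
  have hhint : Integrable h := hhcont.integrable_of_hasCompactSupport hhcs
  -- integral of h over Ω is zero
  have hint0 : ∫ x in Ω, h x = 0 := by
    have hsub : ∀ x, x ∉ Ω → h x = 0 := by
      intro x hx
      have hxt : x ∉ tsupport φ := fun hmem => hx (hφΩ hmem)
      simp [hh, hD, fderiv_of_notMem_tsupport ℝ hxt]
    rw [setIntegral_eq_integral_of_forall_compl_eq_zero hsub]
    rw [hhg]
    have hIBP := integral_mul_fderiv_eq_neg_fderiv_mul_of_integrable
      (μ := volume) (f := fun _ : Fin 2 → ℝ => (1:ℝ)) (g := g) (v := e₁)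
      ?_ ?_ ?_ (fun x _ => differentiableAt_const 1) (fun x _ => hgd x)
    · have : ∀ x : Fin 2 → ℝ, fderiv ℝ (fun _ : Fin 2 → ℝ => (1:ℝ)) x e₁ = 0 := by
        intro x; simp
      simpa [this] using hIBP
    · simpa using (integrable_zero (Fin 2 → ℝ) ℝ volume)
    · simpa [hhg] using hhint
    · simpa using hgsm.continuous.integrable_of_hasCompactSupport hgcs
  -- change of variables
  have hCoV : (∫⁻ x in Ω, ENNReal.ofReal |(L x).det|) = volume (T '' Ω) :=
    lintegral_abs_det_fderiv_eq_addHaar_image volume hΩo.measurableSet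
      (fun x _ => (hTd x).hasFDerivWithinAt) hinj.injOn
  have hrint : IntegrableOn (fun x => A 0 1 + h x) Ω := by
    refine Integrable.add ?_ hhint.integrableOn
    exact integrableOn_const hvolfin.ne
  have hlr : (∫⁻ x in Ω, ENNReal.ofReal |(L x).det|)
      = ENNReal.ofReal (∫ x in Ω, (A 0 1 + h x)) := by
    have h1 : (∫⁻ x in Ω, ENNReal.ofReal |(L x).det|)
        = ∫⁻ x in Ω, ENNReal.ofReal (A 0 1 + h x) := by
      refine lintegral_congr fun x => ?_
      rw [hLdet, abs_of_pos (key x)]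
    rw [h1, ← ofReal_integral_eq_lintegral_ofReal hrint (Filter.Eventually.of_forall
      (fun x => le_of_lt (key x)))]
  have hir : ∫ x in Ω, (A 0 1 + h x) = A 0 1 * (volume Ω).toReal := by
    rw [integral_add (integrableOn_const (C := A 0 1) hvolfin.ne) hhint.integrableOn, hint0,
      add_zero, setIntegral_const, smul_eq_mul, mul_comm, measureReal_def]
  have hvol : volume (T '' Ω) = ENNReal.ofReal (A 0 1) * volume Ω := by
    rw [← hCoV, hlr, hir, ENNReal.ofReal_mul (le_of_lt hA),
      ENNReal.ofReal_toReal hvolfin.ne]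
  rw [hTT]
  exact ⟨hinj.injOn, hopen, hbdd, hvol⟩

end
end
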